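/- arXiv:2411.06941 — 4 statements merged into one kernel-verified Lean document; each statement's English description precedes it below -/
import Mathlib

section
/- For every finite simple graph G and all integers t ≥ 1 and b ≥ 1, the b-fold t-clustered chromatic number of G ⊠ K_t equals the t-clustered chromatic number of G ⊠ K_t ⊠ K_b: χ_b^{\underline{t}}(G ⊠ K_t) = χ^{\underline{t}}(G ⊠ K_t ⊠ K_b). -/
open SimpleGraph Finset Matrix

namespace ImproperPaper

variable {V W : Type*}

/-- The strong product of two simple graphs. -/
def strongProd (G : SimpleGraph V) (H : SimpleGraph W) : SimpleGraph (V × W) where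
  Adj p q := (p.1 = q.1 ∧ H.Adj p.2 q.2) ∨ (G.Adj p.1 q.1 ∧ p.2 = q.2) ∨
    (G.Adj p.1 q.1 ∧ H.Adj p.2 q.2)
  symm := by
    constructor
    rintro ⟨a, b⟩ ⟨x, y⟩ (⟨h1, h2⟩ | ⟨h1, h2⟩ | ⟨h1, h2⟩)
    · exact Or.inl ⟨h1.symm, h2.symm⟩
    · exact Or.inr (Or.inl ⟨h1.symm, h2.symm⟩)
    · exact Or.inr (Or.inr ⟨h1.symm, h2.symm⟩)
  loopless := by
    constructor
    rintro ⟨a, b⟩ (⟨h1, h2⟩ | ⟨h1, h2⟩ | ⟨h1, h2⟩)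
    · exact H.loopless.irrefl b h2
    · exact G.loopless.irrefl a h1
    · exact G.loopless.irrefl a h1

/-- The lexicographical product of two simple graphs. -/
def lexProd (G : SimpleGraph V) (H : SimpleGraph W) : SimpleGraph (V × W) where
  Adj p q := G.Adj p.1 q.1 ∨ (p.1 = q.1 ∧ H.Adj p.2 q.2)
  symm := by
    constructor
    rintro ⟨a, b⟩ ⟨x, y⟩ (h | ⟨h1, h2⟩)
    · exact Or.inl h.symm
    · exact Or.inr ⟨h1.symm, h2.symm⟩
  loopless := by
    constructor
    rintro ⟨a, b⟩ (h | ⟨h1, h2⟩)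
    · exact G.loopless.irrefl a h
    · exact H.loopless.irrefl b h2

instance {G : SimpleGraph V} {H : SimpleGraph W} [DecidableEq V] [DecidableEq W]
    [DecidableRel G.Adj] [DecidableRel H.Adj] : DecidableRel (strongProd G H).Adj := fun p q =>
  show Decidable ((p.1 = q.1 ∧ H.Adj p.2 q.2) ∨ (G.Adj p.1 q.1 ∧ p.2 = q.2) ∨
    (G.Adj p.1 q.1 ∧ H.Adj p.2 q.2)) from inferInstance

/-- A colouring is `d`-improper if every colour class induces a subgraph of
maximum degree at most `d`. -/
def IsImproperColoring (G : SimpleGraph V) (d : ℕ) {α : Type*} (c : V → α) : Prop :=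
  ∀ v : V, ({w | G.Adj v w ∧ c w = c v} : Set V).ncard ≤ d

/-- The `d`-improper chromatic number. -/
noncomputable def improperChromaticNumber (G : SimpleGraph V) (d : ℕ) : ℕ :=
  sInf {n | ∃ c : V → Fin n, IsImproperColoring G d c}

/-- A colouring is `t`-clustered if every monochromatic connected component has at
most `t` vertices. -/
def IsClusteredColoring (G : SimpleGraph V) (t : ℕ) {α : Type*} (c : V → α) : Prop :=
  ∀ v : V,
    ({w | Relation.ReflTransGen (fun a b => G.Adj a b ∧ c a = c b) v w} : Set V).ncard ≤ t

/-- The `t`-clustered chromatic number. -/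
noncomputable def clusteredChromaticNumber (G : SimpleGraph V) (t : ℕ) : ℕ :=
  sInf {n | ∃ c : V → Fin n, IsClusteredColoring G t c}

/-- The chromatic number: least `n` admitting a proper colouring with `n` colours. -/
noncomputable def chromNum (G : SimpleGraph V) : ℕ :=
  sInf {n | ∃ c : V → Fin n, ∀ u v, G.Adj u v → c u ≠ c v}

/-- The `b`-fold `d`-improper chromatic number: least number of colours in an assignment
of `b` colours to each vertex such that, for every colour `x`, the set of vertices whose
colour set contains `x` induces a subgraph of maximum degree at most `d`. -/
noncomputable def bFoldImproperChromaticNumber (G : SimpleGraph V) (b d : ℕ) : ℕ :=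
  sInf {n | ∃ c : V → Finset (Fin n), (∀ v, (c v).card = b) ∧
    ∀ v : V, ∀ x ∈ c v, ({w | G.Adj v w ∧ x ∈ c w} : Set V).ncard ≤ d}

/-- The (proper) `b`-fold chromatic number. -/
noncomputable def bFoldChromaticNumber (G : SimpleGraph V) (b : ℕ) : ℕ :=
  bFoldImproperChromaticNumber G b 0

/-- The `b`-fold `t`-clustered chromatic number. -/
noncomputable def bFoldClusteredChromaticNumber (G : SimpleGraph V) (b t : ℕ) : ℕ :=
  sInf {n | ∃ c : V → Finset (Fin n), (∀ v, (c v).card = b) ∧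
    ∀ x : Fin n, ∀ v : V, x ∈ c v →
      ({w | Relation.ReflTransGen (fun a b' => G.Adj a b' ∧ x ∈ c a ∧ x ∈ c b') v w} :
        Set V).ncard ≤ t}

/-- The fractional chromatic number `χ_f(G) = inf { χ_b(G)/b : b ≥ 1 }`. -/
noncomputable def fracChromaticNumber (G : SimpleGraph V) : ℝ :=
  sInf {x : ℝ | ∃ b : ℕ, 0 < b ∧ x = (bFoldChromaticNumber G b : ℝ) / b}

/-- The fractional `d`-improper chromatic number. -/
noncomputable def fracImproperChromaticNumber (G : SimpleGraph V) (d : ℕ) : ℝ :=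
  sInf {x : ℝ | ∃ b : ℕ, 0 < b ∧ x = (bFoldImproperChromaticNumber G b d : ℝ) / b}

/-- The fractional `t`-clustered chromatic number. -/
noncomputable def fracClusteredChromaticNumber (G : SimpleGraph V) (t : ℕ) : ℝ :=
  sInf {x : ℝ | ∃ b : ℕ, 0 < b ∧ x = (bFoldClusteredChromaticNumber G b t : ℝ) / b}

/-- `lam` lists the eigenvalues of the Hermitian matrix `A` (with multiplicity) in
non-increasing order. -/
def IsEigList {n : ℕ} {A : Matrix (Fin n) (Fin n) ℝ} (hA : A.IsHermitian)
    (lam : Fin n → ℝ) : Prop :=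
  Antitone lam ∧ ∃ σ : Equiv.Perm (Fin n), lam = hA.eigenvalues ∘ σ

/-- The largest size of a vertex subset inducing a subgraph of maximum degree at most `d`. -/
noncomputable def maxImproperIndep (G : SimpleGraph V) (d : ℕ) : ℕ :=
  sSup {k | ∃ s : Set V, s.ncard = k ∧ ∀ v ∈ s, ({w | w ∈ s ∧ G.Adj v w} : Set V).ncard ≤ d}

end ImproperPaper

namespace Stmt8Aux

open ImproperPaper SimpleGraph Relation

variable {V : Type*} {t b n : ℕ}

private lemma sp_adj {W X : Type*} (G : SimpleGraph W) (H : SimpleGraph X) (p q : W × X) :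
    (strongProd G H).Adj p q ↔ ((p.1 = q.1 ∧ H.Adj p.2 q.2) ∨ (G.Adj p.1 q.1 ∧ p.2 = q.2) ∨
      (G.Adj p.1 q.1 ∧ H.Adj p.2 q.2)) := Iff.rfl

private lemma clique_adj (G : SimpleGraph V) {v : V} {k k' : Fin t} {j j' : Fin b}
    (h : ¬(k = k' ∧ j = j')) :
    (strongProd (strongProd G (⊤ : SimpleGraph (Fin t))) (⊤ : SimpleGraph (Fin b))).Adj
      ((v, k), j) ((v, k'), j') := by
  rw [sp_adj]
  by_cases hk : k = k'
  · subst hk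
    have hj : j ≠ j' := fun hj => h ⟨rfl, hj⟩
    exact Or.inl ⟨rfl, (top_adj _ _).mpr hj⟩
  · have hH : (strongProd G (⊤ : SimpleGraph (Fin t))).Adj (v, k) (v, k') := by
      rw [sp_adj]; exact Or.inl ⟨rfl, (top_adj _ _).mpr hk⟩
    by_cases hj : j = j'
    · exact Or.inr (Or.inl ⟨hH, hj⟩)
    · exact Or.inr (Or.inr ⟨hH, (top_adj _ _).mpr hj⟩)

private lemma cross_adj (G : SimpleGraph V) {v v' : V} (hG : G.Adj v v')
    (k k' : Fin t) (j j' : Fin b) :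
    (strongProd (strongProd G (⊤ : SimpleGraph (Fin t))) (⊤ : SimpleGraph (Fin b))).Adj
      ((v, k), j) ((v', k'), j') := by
  rw [sp_adj]
  have hH : (strongProd G (⊤ : SimpleGraph (Fin t))).Adj (v, k) (v', k') := by
    rw [sp_adj]
    by_cases hk : k = k'
    · exact Or.inr (Or.inl ⟨hG, hk⟩)
    · exact Or.inr (Or.inr ⟨hG, (top_adj _ _).mpr hk⟩)
  by_cases hj : j = j'
  · exact Or.inr (Or.inl ⟨hH, hj⟩)
  · exact Or.inr (Or.inr ⟨hH, (top_adj _ _).mpr hj⟩)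

/-! ### Direction A: a `b`-fold `t`-clustered colouring gives a `t`-clustered colouring of
the product with `K_b`. -/

private lemma dirA [Fintype V] (G : SimpleGraph V)
    (c : V × Fin t → Finset (Fin n)) (hcard : ∀ u, (c u).card = b)
    (hclus : ∀ x : Fin n, ∀ u, x ∈ c u →
      ({w | Relation.ReflTransGen
          (fun a b' => (strongProd G (⊤ : SimpleGraph (Fin t))).Adj a b' ∧ x ∈ c a ∧ x ∈ c b')
          u w} : Set (V × Fin t)).ncard ≤ t) :
    ∃ φ : (V × Fin t) × Fin b → Fin n,
      IsClusteredColoring (strongProd (strongProd G (⊤ : SimpleGraph (Fin t)))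
        (⊤ : SimpleGraph (Fin b))) t φ := by
  classical
  set H := strongProd G (⊤ : SimpleGraph (Fin t)) with hHdef
  set P := strongProd H (⊤ : SimpleGraph (Fin b)) with hPdef
  set φ : (V × Fin t) × Fin b → Fin n :=
    fun w => ((c w.1).orderIsoOfFin (hcard w.1) w.2 : Fin n) with hφdef
  have hmem : ∀ w : (V × Fin t) × Fin b, φ w ∈ c w.1 :=
    fun w => ((c w.1).orderIsoOfFin (hcard w.1) w.2).2
  have hinj : ∀ (u : V × Fin t) (j j' : Fin b), φ (u, j) = φ (u, j') → j = j' := by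
    intro u j j' h
    exact ((c u).orderIsoOfFin (hcard u)).toEquiv.injective (Subtype.ext h)
  refine ⟨φ, ?_⟩
  intro w0
  set x := φ w0 with hx
  have key : ∀ a b' : (V × Fin t) × Fin b, P.Adj a b' → φ a = φ b' → H.Adj a.1 b'.1 := by
    rintro ⟨u, j⟩ ⟨u', j'⟩ hadj heq
    rw [hPdef, sp_adj] at hadj
    rcases hadj with ⟨h1, h2⟩ | ⟨h1, h2⟩ | ⟨h1, h2⟩
    · exfalso
      dsimp only at h1 h2
      subst h1
      exact (top_adj _ _).mp h2 (hinj u j j' heq)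
    · exact h1
    · exact h1
  have main : ∀ w, Relation.ReflTransGen (fun a b' => P.Adj a b' ∧ φ a = φ b') w0 w →
      φ w = x ∧ Relation.ReflTransGen
        (fun a b' => H.Adj a b' ∧ x ∈ c a ∧ x ∈ c b') w0.1 w.1 := by
    intro w hw
    induction hw with
    | refl => exact ⟨rfl, Relation.ReflTransGen.refl⟩
    | @tail w1 w2 hp hstep ih =>
      have hcol : φ w2 = x := by rw [← hstep.2]; exact ih.1
      refine ⟨hcol, ih.2.tail ⟨key _ _ hstep.1 hstep.2, ?_, ?_⟩⟩
      · exact ih.1 ▸ hmem w1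
      · exact hcol ▸ hmem w2
  have h1 : ∀ w ∈ ({w | Relation.ReflTransGen
        (fun a b' => P.Adj a b' ∧ φ a = φ b') w0 w} : Set ((V × Fin t) × Fin b)),
      w.1 ∈ ({u | Relation.ReflTransGen
        (fun a b' => H.Adj a b' ∧ x ∈ c a ∧ x ∈ c b') w0.1 u} : Set (V × Fin t)) :=
    fun w hw => (main w hw).2
  have h2 : Set.InjOn Prod.fst ({w | Relation.ReflTransGen
      (fun a b' => P.Adj a b' ∧ φ a = φ b') w0 w} : Set ((V × Fin t) × Fin b)) := by
    rintro ⟨u, j⟩ hw ⟨u', j'⟩ hw' h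
    dsimp only at h
    subst h
    have e1 : φ (u, j) = x := (main _ hw).1
    have e2 : φ (u, j') = x := (main _ hw').1
    have : j = j' := hinj u j j' (by rw [e1, e2])
    rw [this]
  exact le_trans
    (Set.ncard_le_ncard_of_injOn Prod.fst h1 h2 (Set.toFinite _))
    (hclus x w0.1 (hmem w0))

/-! ### Direction B setup: sorting the clique above each vertex of `G`. -/

variable (φ : (V × Fin t) × Fin b → Fin n)

private def base (v : V) (p : Fin (b * t)) : Fin n :=
  φ ((v, (finProdFinEquiv.symm p).2), (finProdFinEquiv.symm p).1)

private def sv (v : V) (p : Fin (b * t)) : (V × Fin t) × Fin b :=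
  ((v, (finProdFinEquiv.symm (Tuple.sort (base φ v) p)).2),
    (finProdFinEquiv.symm (Tuple.sort (base φ v) p)).1)

private def g (v : V) (p : Fin (b * t)) : Fin n :=
  base φ v (Tuple.sort (base φ v) p)

private lemma φ_sv (v : V) (p : Fin (b * t)) : φ (sv φ v p) = g φ v p := rfl

private lemma g_mono (v : V) : Monotone (g φ v) :=
  Tuple.monotone_sort (base φ v)

private lemma sv_inj (v : V) : Function.Injective (sv φ v) := by
  intro p q h
  have h1 := congrArg (fun z : (V × Fin t) × Fin b => z.1.2) h
  have h2 := congrArg (fun z : (V × Fin t) × Fin b => z.2) h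
  dsimp only [sv] at h1 h2
  have h3 : finProdFinEquiv.symm (Tuple.sort (base φ v) p)
      = finProdFinEquiv.symm (Tuple.sort (base φ v) q) := Prod.ext h2 h1
  exact (Tuple.sort (base φ v)).injective (finProdFinEquiv.symm.injective h3)

private lemma sv_clique (G : SimpleGraph V) {v : V} {p q : Fin (b * t)} (hpq : p ≠ q) :
    (strongProd (strongProd G (⊤ : SimpleGraph (Fin t))) (⊤ : SimpleGraph (Fin b))).Adj
      (sv φ v p) (sv φ v q) := by
  apply clique_adj G
  rintro ⟨hk, hj⟩
  exact hpq ((Tuple.sort (base φ v)).injective (finProdFinEquiv.symm.injective (Prod.ext hj hk)))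

private lemma sv_cross (G : SimpleGraph V) {v v' : V} (hG : G.Adj v v') (p q : Fin (b * t)) :
    (strongProd (strongProd G (⊤ : SimpleGraph (Fin t))) (⊤ : SimpleGraph (Fin b))).Adj
      (sv φ v p) (sv φ v' q) :=
  cross_adj G hG _ _ _ _

private lemma dist_le [Fintype V] (G : SimpleGraph V)
    (hφ : IsClusteredColoring (strongProd (strongProd G (⊤ : SimpleGraph (Fin t)))
      (⊤ : SimpleGraph (Fin b))) t φ)
    (v : V) (p q : Fin (b * t)) (hpq : p ≤ q) (hg : g φ v p = g φ v q) :
    (q : ℕ) + 1 - (p : ℕ) ≤ t := by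
  classical
  have hmono := g_mono φ v
  have hmaps : ∀ r ∈ ((Finset.Icc p q : Finset (Fin (b * t))) : Set (Fin (b * t))),
      sv φ v r ∈ ({w | Relation.ReflTransGen
        (fun a b' => (strongProd (strongProd G (⊤ : SimpleGraph (Fin t)))
          (⊤ : SimpleGraph (Fin b))).Adj a b' ∧ φ a = φ b') (sv φ v p) w} :
        Set ((V × Fin t) × Fin b)) := by
    intro r hr
    simp only [Finset.coe_Icc, Set.mem_Icc] at hr
    have hgr : g φ v p = g φ v r :=
      le_antisymm (hmono hr.1) (hg ▸ hmono hr.2)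
    rcases eq_or_ne p r with h | h
    · cases h; exact Relation.ReflTransGen.refl
    · exact Relation.ReflTransGen.single
        ⟨sv_clique φ G h, hgr⟩
  calc (q : ℕ) + 1 - (p : ℕ) = (Finset.Icc p q).card := (Fin.card_Icc p q).symm
    _ = ((Finset.Icc p q : Finset (Fin (b * t))) : Set (Fin (b * t))).ncard :=
        (Set.ncard_coe_finset _).symm
    _ ≤ _ := Set.ncard_le_ncard_of_injOn (sv φ v) hmaps ((sv_inj φ v).injOn) (Set.toFinite _)
    _ ≤ t := hφ (sv φ v p)

private lemma g_pos_inj [Fintype V] (G : SimpleGraph V)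
    (hφ : IsClusteredColoring (strongProd (strongProd G (⊤ : SimpleGraph (Fin t)))
      (⊤ : SimpleGraph (Fin b))) t φ)
    (v : V) (k : Fin t) :
    Function.Injective (fun i : Fin b => g φ v (finProdFinEquiv (i, k))) := by
  have key : ∀ i i' : Fin b, i < i' →
      g φ v (finProdFinEquiv (i, k)) ≠ g φ v (finProdFinEquiv (i', k)) := by
    intro i i' hlt hgeq
    have hle : (finProdFinEquiv (i, k) : Fin (b * t)) ≤ finProdFinEquiv (i', k) := by
      rw [Fin.le_def]
      show (k : ℕ) + t * i ≤ (k : ℕ) + t * i'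
      have := Nat.mul_le_mul_left t hlt.le
      omega
    have hd := dist_le φ G hφ v _ _ hle hgeq
    have hv1 : ((finProdFinEquiv (i, k) : Fin (b * t)) : ℕ) = (k : ℕ) + t * i := rfl
    have hv2 : ((finProdFinEquiv (i', k) : Fin (b * t)) : ℕ) = (k : ℕ) + t * i' := rfl
    rw [hv1, hv2] at hd
    have hmul : t * ((i : ℕ) + 1) ≤ t * (i' : ℕ) := Nat.mul_le_mul_left t hlt
    rw [Nat.mul_add, Nat.mul_one] at hmul
    set A := t * (i : ℕ) with hA
    set B := t * (i' : ℕ) with hB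
    omega
  intro i i' h
  rcases lt_trichotomy i i' with hl | he | hl
  · exact absurd h (key _ _ hl)
  · exact he
  · exact absurd h.symm (key _ _ hl)

/-! ### Direction B. -/

private lemma dirB [Fintype V] (G : SimpleGraph V) (hb : 1 ≤ b)
    (φ : (V × Fin t) × Fin b → Fin n)
    (hφ : IsClusteredColoring (strongProd (strongProd G (⊤ : SimpleGraph (Fin t)))
      (⊤ : SimpleGraph (Fin b))) t φ) :
    ∃ c : V × Fin t → Finset (Fin n), (∀ u, (c u).card = b) ∧
      ∀ x : Fin n, ∀ u, x ∈ c u →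
        ({w | Relation.ReflTransGen
            (fun a b' => (strongProd G (⊤ : SimpleGraph (Fin t))).Adj a b' ∧ x ∈ c a ∧ x ∈ c b')
            u w} : Set (V × Fin t)).ncard ≤ t := by
  classical
  set c : V × Fin t → Finset (Fin n) :=
    fun u => Finset.image (fun i : Fin b => g φ u.1 (finProdFinEquiv (i, u.2))) Finset.univ
    with hcdef
  have memc : ∀ (y : Fin n) (u : V × Fin t),
      y ∈ c u ↔ ∃ i : Fin b, g φ u.1 (finProdFinEquiv (i, u.2)) = y := by
    intro y u
    simp [hcdef]
  refine ⟨c, ?_, ?_⟩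
  · intro u
    rw [hcdef]
    rw [Finset.card_image_of_injective _ (g_pos_inj φ G hφ u.1 u.2), Finset.card_univ,
      Fintype.card_fin]
  · intro x u₀ hx₀
    set f : V × Fin t → (V × Fin t) × Fin b := fun u =>
      if h : ∃ i : Fin b, g φ u.1 (finProdFinEquiv (i, u.2)) = x then
        sv φ u.1 (finProdFinEquiv (h.choose, u.2))
      else sv φ u.1 (finProdFinEquiv (⟨0, hb⟩, u.2)) with hfdef
    have hfval : ∀ (u : V × Fin t) (h : ∃ i : Fin b, g φ u.1 (finProdFinEquiv (i, u.2)) = x),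
        f u = sv φ u.1 (finProdFinEquiv (h.choose, u.2)) := by
      intro u h
      simp only [hfdef]
      exact dif_pos h
    have hφf : ∀ (u : V × Fin t) (h : ∃ i : Fin b, g φ u.1 (finProdFinEquiv (i, u.2)) = x),
        φ (f u) = x := by
      intro u h
      rw [hfval u h]
      exact h.choose_spec
    have hstep : ∀ a b' : V × Fin t,
        (strongProd G (⊤ : SimpleGraph (Fin t))).Adj a b' →
        (∃ i : Fin b, g φ a.1 (finProdFinEquiv (i, a.2)) = x) →
        (∃ i : Fin b, g φ b'.1 (finProdFinEquiv (i, b'.2)) = x) →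
        (strongProd (strongProd G (⊤ : SimpleGraph (Fin t)))
          (⊤ : SimpleGraph (Fin b))).Adj (f a) (f b') ∧ φ (f a) = φ (f b') := by
      rintro ⟨v, k⟩ ⟨v', k'⟩ hadj ha hb'
      refine ⟨?_, by rw [hφf _ ha, hφf _ hb']⟩
      rw [hfval _ ha, hfval _ hb']
      rw [sp_adj] at hadj
      rcases hadj with ⟨h1, h2⟩ | ⟨h1, h2⟩ | ⟨h1, h2⟩
      · dsimp only at h1 h2
        subst h1
        refine sv_clique φ G ?_
        intro heq
        exact (top_adj _ _).mp h2 (congrArg Prod.snd (finProdFinEquiv.injective heq))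
      · exact sv_cross φ G h1 _ _
      · exact sv_cross φ G h1 _ _
    have hTx : ∀ u : V × Fin t, Relation.ReflTransGen
        (fun a b' => (strongProd G (⊤ : SimpleGraph (Fin t))).Adj a b' ∧ x ∈ c a ∧ x ∈ c b')
        u₀ u → ∃ i : Fin b, g φ u.1 (finProdFinEquiv (i, u.2)) = x := by
      intro u hu
      induction hu with
      | refl => exact (memc x u₀).mp hx₀
      | tail _ hst _ => exact (memc x _).mp hst.2.2
    have hmap : ∀ u : V × Fin t, Relation.ReflTransGen
        (fun a b' => (strongProd G (⊤ : SimpleGraph (Fin t))).Adj a b' ∧ x ∈ c a ∧ x ∈ c b')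
        u₀ u → Relation.ReflTransGen
        (fun a b' => (strongProd (strongProd G (⊤ : SimpleGraph (Fin t)))
          (⊤ : SimpleGraph (Fin b))).Adj a b' ∧ φ a = φ b') (f u₀) (f u) := by
      intro u hu
      induction hu with
      | refl => exact Relation.ReflTransGen.refl
      | tail hp hst ih =>
        exact ih.tail (hstep _ _ hst.1 ((memc x _).mp hst.2.1) ((memc x _).mp hst.2.2))
    have hinje : Set.InjOn f ({w | Relation.ReflTransGen
        (fun a b' => (strongProd G (⊤ : SimpleGraph (Fin t))).Adj a b' ∧ x ∈ c a ∧ x ∈ c b')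
        u₀ w} : Set (V × Fin t)) := by
      intro u hu u' hu' heq
      have ha := hTx u hu
      have ha' := hTx u' hu'
      rw [hfval u ha, hfval u' ha'] at heq
      have hv : u.1 = u'.1 := congrArg (fun z : (V × Fin t) × Fin b => z.1.1) heq
      obtain ⟨v, k⟩ := u
      obtain ⟨v', k'⟩ := u'
      dsimp only at hv
      subst hv
      have hpos : (finProdFinEquiv (ha.choose, k) : Fin (b * t))
          = finProdFinEquiv (ha'.choose, k') := sv_inj φ v heq
      have hk : k = k' := congrArg Prod.snd (finProdFinEquiv.injective hpos)
      rw [hk]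
    exact le_trans
      (Set.ncard_le_ncard_of_injOn f (fun u hu => hmap u hu) hinje (Set.toFinite _))
      (hφ (f u₀))

end Stmt8Aux


open ImproperPaper in

theorem stmt_8 {V : Type*} [Fintype V] (G : SimpleGraph V) (t b : ℕ) (ht : 1 ≤ t)
    (hb : 1 ≤ b) :
    bFoldClusteredChromaticNumber (strongProd G (⊤ : SimpleGraph (Fin t))) b t =
      clusteredChromaticNumber
        (strongProd (strongProd G (⊤ : SimpleGraph (Fin t)))
          (⊤ : SimpleGraph (Fin b))) t := by
  unfold ImproperPaper.bFoldClusteredChromaticNumber ImproperPaper.clusteredChromaticNumber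
  congr 1
  ext n
  simp only [Set.mem_setOf_eq]
  constructor
  · rintro ⟨c, h1, h2⟩
    exact Stmt8Aux.dirA G c h1 h2
  · rintro ⟨φ, hφ⟩
    exact Stmt8Aux.dirB G hb φ hφ
end

section
/- For every finite simple graph G on n vertices and all positive integers d and m with m ≤ n, the d-improper chromatic number satisfies χ^d(G) ≥ 1 + (−dm + Σ_{i=1}^m λ_i)/(dm + Σ_{i=1}^m (λ_i + μ_i − θ_i)), where λ₁ ≥ … ≥ λₙ are the adjacency eigenvalues, μ₁ ≥ … ≥ μₙ are the Laplacian eigenvalues and θ₁ ≥ … ≥ θₙ are the signless Laplacian eigenvalues of G. -/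
open SimpleGraph Finset Matrix

namespace SpecAux

variable {n : ℕ}

/-- A "fractional projection of rank m": PSD, ≤ I (as quadratic forms), trace m. -/
structure FrameProj (P : Matrix (Fin n) (Fin n) ℝ) (m : ℕ) : Prop where
  nonneg : ∀ x : Fin n → ℝ, 0 ≤ x ⬝ᵥ P *ᵥ x
  le_one : ∀ x : Fin n → ℝ, x ⬝ᵥ P *ᵥ x ≤ x ⬝ᵥ x
  tr : P.trace = (m : ℝ)

lemma card_filter_lt {m : ℕ} (hmn : m ≤ n) :
    (univ.filter (fun i : Fin n => (i : ℕ) < m)).card = m := by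
  have : univ.filter (fun i : Fin n => (i : ℕ) < m) = univ.map (Fin.castLEEmb hmn) := by
    ext j
    simp only [mem_filter, mem_univ, true_and, mem_map, Fin.castLEEmb,
      Function.Embedding.coeFn_mk]
    constructor
    · intro hj; exact ⟨⟨j, hj⟩, by simp [Fin.castLE]⟩
    · rintro ⟨a, rfl⟩; simpa [Fin.castLE] using a.isLt
  rw [this]; simp

lemma lp_bound {m : ℕ} (hm : 0 < m) (hmn : m ≤ n) (nu : Fin n → ℝ) (hnu : Antitone nu)
    (s : Fin n → ℝ) (h0 : ∀ i, 0 ≤ s i) (h1 : ∀ i, s i ≤ 1) (hsum : ∑ i, s i = (m : ℝ)) :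
    ∑ i, nu i * s i ≤ ∑ i ∈ univ.filter (fun i : Fin n => (i : ℕ) < m), nu i := by
  have hlt : m - 1 < n := by omega
  set c : ℝ := nu ⟨m - 1, hlt⟩ with hc
  have key : ∑ i, (nu i - c) * s i ≤
      ∑ i ∈ univ.filter (fun i : Fin n => (i : ℕ) < m), (nu i - c) := by
    rw [← Finset.sum_filter_add_sum_filter_not univ (fun i : Fin n => (i : ℕ) < m)
      (fun i => (nu i - c) * s i)]
    have h2 : ∑ i ∈ univ.filter (fun i : Fin n => ¬ (i : ℕ) < m), (nu i - c) * s i ≤ 0 := by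
      apply Finset.sum_nonpos
      intro i hi
      simp only [mem_filter, mem_univ, true_and, not_lt] at hi
      have : nu i ≤ c := hnu (by simp [Fin.le_def]; omega)
      exact mul_nonpos_of_nonpos_of_nonneg (by linarith) (h0 i)
    have h3 : ∑ i ∈ univ.filter (fun i : Fin n => (i : ℕ) < m), (nu i - c) * s i ≤
        ∑ i ∈ univ.filter (fun i : Fin n => (i : ℕ) < m), (nu i - c) := by
      apply Finset.sum_le_sum
      intro i hi
      simp only [mem_filter, mem_univ, true_and] at hi
      have hcle : c ≤ nu i := hnu (by simp [Fin.le_def]; omega)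
      nlinarith [h1 i, h0 i]
    linarith
  have e1 : ∑ i, (nu i - c) * s i = ∑ i, nu i * s i - c * (m : ℝ) := by
    rw [← hsum, Finset.mul_sum, ← Finset.sum_sub_distrib]
    congr 1; ext i; ring
  have e2 : ∑ i ∈ univ.filter (fun i : Fin n => (i : ℕ) < m), (nu i - c) =
      (∑ i ∈ univ.filter (fun i : Fin n => (i : ℕ) < m), nu i) - c * (m : ℝ) := by
    rw [Finset.sum_sub_distrib, Finset.sum_const, card_filter_lt hmn, nsmul_eq_mul]; ring
  rw [e1, e2] at key; linarith

lemma quad_eq_sum (M : Matrix (Fin n) (Fin n) ℝ) (x : Fin n → ℝ) :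
    x ⬝ᵥ M *ᵥ x = ∑ u, ∑ v, x u * M u v * x v := by
  simp [dotProduct, mulVec, Finset.mul_sum, mul_assoc]

lemma entry_eq (P U : Matrix (Fin n) (Fin n) ℝ) (j : Fin n) :
    (star U * P * U) j j = (fun i => U i j) ⬝ᵥ P *ᵥ (fun i => U i j) := by
  simp only [mul_apply, dotProduct, mulVec, star_apply, conjTranspose_apply, star_trivial,
    Finset.sum_mul, Finset.mul_sum, dotProduct]
  rw [Finset.sum_comm]
  congr 1; ext a; congr 1; ext b; ring

lemma diag_real {M : Matrix (Fin n) (Fin n) ℝ} (hM : M.IsHermitian) :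
    Matrix.diagonal (RCLike.ofReal ∘ hM.eigenvalues) = Matrix.diagonal hM.eigenvalues := rfl

lemma trace_mul_eq_sum {M P : Matrix (Fin n) (Fin n) ℝ} (hM : M.IsHermitian) :
    (M * P).trace = ∑ j, hM.eigenvalues j *
      ((fun i => (hM.eigenvectorUnitary : Matrix (Fin n) (Fin n) ℝ) i j) ⬝ᵥ
        P *ᵥ (fun i => (hM.eigenvectorUnitary : Matrix (Fin n) (Fin n) ℝ) i j)) := by
  set U : Matrix (Fin n) (Fin n) ℝ := (hM.eigenvectorUnitary : Matrix (Fin n) (Fin n) ℝ)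
    with hUdef
  have hspec : M = U * Matrix.diagonal hM.eigenvalues * star U := by
    have := hM.spectral_theorem
    rw [diag_real hM] at this
    exact this
  calc (M * P).trace = (U * Matrix.diagonal hM.eigenvalues * star U * P).trace := by
        rw [← hspec]
    _ = ((star U * P * U) * Matrix.diagonal hM.eigenvalues).trace := by
        rw [Matrix.mul_assoc (U * Matrix.diagonal hM.eigenvalues) (star U) P,
          Matrix.trace_mul_comm, ← Matrix.mul_assoc]
    _ = ∑ j, hM.eigenvalues j * ((star U * P * U) j j) := by
        rw [Matrix.trace]; simp only [Matrix.mul_diagonal, Matrix.diag]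
        congr 1; ext j; ring
    _ = _ := by
        congr 1; ext j; rw [entry_eq]

lemma weights_facts {M : Matrix (Fin n) (Fin n) ℝ} (hM : M.IsHermitian)
    {P : Matrix (Fin n) (Fin n) ℝ} {m : ℕ} (hP : FrameProj P m) :
    (∀ j, 0 ≤ ((fun i => (hM.eigenvectorUnitary : Matrix (Fin n) (Fin n) ℝ) i j) ⬝ᵥ
        P *ᵥ (fun i => (hM.eigenvectorUnitary : Matrix (Fin n) (Fin n) ℝ) i j))) ∧
    (∀ j, ((fun i => (hM.eigenvectorUnitary : Matrix (Fin n) (Fin n) ℝ) i j) ⬝ᵥ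
        P *ᵥ (fun i => (hM.eigenvectorUnitary : Matrix (Fin n) (Fin n) ℝ) i j)) ≤ 1) ∧
    (∑ j, ((fun i => (hM.eigenvectorUnitary : Matrix (Fin n) (Fin n) ℝ) i j) ⬝ᵥ
        P *ᵥ (fun i => (hM.eigenvectorUnitary : Matrix (Fin n) (Fin n) ℝ) i j)) = (m : ℝ)) := by
  set U : Matrix (Fin n) (Fin n) ℝ := (hM.eigenvectorUnitary : Matrix (Fin n) (Fin n) ℝ)
    with hUdef
  have hU1 : star U * U = 1 := hM.eigenvectorUnitary.prop.1
  have hU2 : U * star U = 1 := hM.eigenvectorUnitary.prop.2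
  refine ⟨fun j => hP.nonneg _, fun j => ?_, ?_⟩
  · refine le_trans (hP.le_one _) ?_
    have : (fun i => U i j) ⬝ᵥ (fun i => U i j) = (star U * U) j j := by
      simp only [mul_apply, dotProduct, star_apply, conjTranspose_apply, star_trivial]
    rw [this, hU1]
    simp [Matrix.one_apply]
  · have hsum : ∀ j, (fun i => U i j) ⬝ᵥ P *ᵥ (fun i => U i j) = (star U * P * U) j j :=
      fun j => (entry_eq P U j).symm
    calc ∑ j, (fun i => U i j) ⬝ᵥ P *ᵥ (fun i => U i j)
        = ∑ j, (star U * P * U) j j := by simp only [hsum]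
      _ = (star U * P * U).trace := rfl
      _ = P.trace := by rw [trace_mul_cycle, hU2, one_mul]
      _ = (m : ℝ) := hP.tr

/-- Ky Fan style upper bound. -/
lemma kyFan {m : ℕ} (hm : 0 < m) (hmn : m ≤ n) {M P : Matrix (Fin n) (Fin n) ℝ}
    (hM : M.IsHermitian) (nu : Fin n → ℝ) (hanti : Antitone nu) (σ : Equiv.Perm (Fin n))
    (hσ : nu = hM.eigenvalues ∘ σ) (hP : FrameProj P m) :
    (M * P).trace ≤ ∑ i ∈ univ.filter (fun i : Fin n => (i : ℕ) < m), nu i := by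
  obtain ⟨h0, h1, hsum⟩ := weights_facts hM hP
  set t : Fin n → ℝ := fun j =>
    ((fun i => (hM.eigenvectorUnitary : Matrix (Fin n) (Fin n) ℝ) i j) ⬝ᵥ
      P *ᵥ (fun i => (hM.eigenvectorUnitary : Matrix (Fin n) (Fin n) ℝ) i j)) with ht
  rw [trace_mul_eq_sum hM]
  have hre : ∑ j, hM.eigenvalues j * t j = ∑ i, nu i * t (σ i) := by
    rw [← Equiv.sum_comp σ (fun j => hM.eigenvalues j * t j)]
    congr 1; ext i; rw [hσ]; rfl
  rw [hre]
  exact lp_bound hm hmn nu hanti (fun i => t (σ i)) (fun i => h0 _) (fun i => h1 _)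
    (by rw [Equiv.sum_comp σ t]; exact hsum)

/-- trace of product of a PSD matrix with a frame projection is nonneg. -/
lemma trace_psd_nonneg {X P : Matrix (Fin n) (Fin n) ℝ} {m : ℕ}
    (hX : X.PosSemidef) (hP : FrameProj P m) : 0 ≤ (X * P).trace := by
  obtain ⟨h0, _, _⟩ := weights_facts hX.1 hP
  rw [trace_mul_eq_sum hX.1]
  exact Finset.sum_nonneg fun j _ =>
    mul_nonneg (hX.eigenvalues_nonneg j) (h0 j)

/-- The spectral projection onto eigenvectors indexed by `S`. -/
noncomputable def projOf {M : Matrix (Fin n) (Fin n) ℝ} (hM : M.IsHermitian)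
    (S : Finset (Fin n)) : Matrix (Fin n) (Fin n) ℝ :=
  (hM.eigenvectorUnitary : Matrix (Fin n) (Fin n) ℝ) *
    Matrix.diagonal (fun j => if j ∈ S then (1 : ℝ) else 0) *
    star (hM.eigenvectorUnitary : Matrix (Fin n) (Fin n) ℝ)

lemma projOf_frameProj {M : Matrix (Fin n) (Fin n) ℝ} (hM : M.IsHermitian)
    (S : Finset (Fin n)) : FrameProj (projOf hM S) S.card := by
  set U : Matrix (Fin n) (Fin n) ℝ := (hM.eigenvectorUnitary : Matrix (Fin n) (Fin n) ℝ)
  have hU1 : star U * U = 1 := hM.eigenvectorUnitary.prop.1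
  have hU2 : U * star U = 1 := hM.eigenvectorUnitary.prop.2
  have hUT : star U = U.transpose := Matrix.conjTranspose_eq_transpose_of_trivial U
  set ind : Fin n → ℝ := fun j => if j ∈ S then (1 : ℝ) else 0
  have quad : ∀ x : Fin n → ℝ,
      x ⬝ᵥ (projOf hM S) *ᵥ x = ∑ j, ind j * ((star U *ᵥ x) j)^2 := by
    intro x
    have h1 : (projOf hM S) *ᵥ x = U *ᵥ (Matrix.diagonal ind *ᵥ (star U *ᵥ x)) := by
      simp only [projOf, ← Matrix.mulVec_mulVec]
      rfl
    rw [h1, Matrix.dotProduct_mulVec, ← Matrix.transpose_transpose U,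
      Matrix.vecMul_transpose, Matrix.transpose_transpose, ← hUT]
    simp only [Matrix.mulVec_diagonal, dotProduct]
    congr 1; ext j; ring
  have hyy : ∀ x : Fin n → ℝ, ∑ j, ((star U *ᵥ x) j)^2 = x ⬝ᵥ x := by
    intro x
    have h2 : ∑ j, ((star U *ᵥ x) j)^2 = (star U *ᵥ x) ⬝ᵥ (star U *ᵥ x) := by
      simp [dotProduct, pow_two]
    rw [h2, Matrix.dotProduct_mulVec, ← Matrix.transpose_transpose (star U),
      Matrix.vecMul_transpose, Matrix.transpose_transpose, hUT, Matrix.transpose_transpose,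
      ← hUT, Matrix.mulVec_mulVec, hU2, Matrix.one_mulVec]
  constructor
  · intro x
    rw [quad x]
    exact Finset.sum_nonneg fun j _ => mul_nonneg
      (by simp only [ind]; split <;> norm_num) (sq_nonneg _)
  · intro x
    rw [quad x, ← hyy x]
    apply Finset.sum_le_sum
    intro j _
    have hle : ind j ≤ 1 := by simp only [ind]; split <;> norm_num
    calc ind j * ((star U *ᵥ x) j)^2 ≤ 1 * ((star U *ᵥ x) j)^2 :=
          mul_le_mul_of_nonneg_right hle (sq_nonneg _)
      _ = ((star U *ᵥ x) j)^2 := by ring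
  · have : (projOf hM S).trace = (Matrix.diagonal ind).trace := by
      rw [projOf, trace_mul_cycle, hU1, one_mul]
    rw [this, Matrix.trace_diagonal]
    simp [ind]

lemma trace_mul_projOf {M : Matrix (Fin n) (Fin n) ℝ} (hM : M.IsHermitian)
    (S : Finset (Fin n)) :
    (M * projOf hM S).trace = ∑ j ∈ S, hM.eigenvalues j := by
  set U : Matrix (Fin n) (Fin n) ℝ := (hM.eigenvectorUnitary : Matrix (Fin n) (Fin n) ℝ)
  have hU1 : star U * U = 1 := hM.eigenvectorUnitary.prop.1
  set ind : Fin n → ℝ := fun j => if j ∈ S then (1 : ℝ) else 0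
  have hspec : M = U * Matrix.diagonal hM.eigenvalues * star U := by
    have := hM.spectral_theorem; rw [diag_real hM] at this; exact this
  have key : M * projOf hM S =
      U * (Matrix.diagonal hM.eigenvalues * Matrix.diagonal ind) * star U := by
    nth_rewrite 1 [hspec]
    simp only [projOf]
    calc U * Matrix.diagonal hM.eigenvalues * star U * (U * Matrix.diagonal ind * star U)
        = U * Matrix.diagonal hM.eigenvalues * (star U * U) * Matrix.diagonal ind * star U := by
          simp only [Matrix.mul_assoc]
      _ = U * (Matrix.diagonal hM.eigenvalues * Matrix.diagonal ind) * star U := by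
          rw [hU1]; simp only [Matrix.mul_one, Matrix.mul_assoc]
  rw [Matrix.diagonal_mul_diagonal] at key
  rw [key, trace_mul_cycle, hU1, one_mul, Matrix.trace_diagonal]
  simp [ind, mul_ite, mul_one, mul_zero, Finset.sum_ite_mem, Finset.univ_inter]

/-- Sum of cosines of equally spaced angles. -/
lemma cos_sum_eq (K : ℕ) (hK : 0 < K) (a b : ℕ) (ha : a < K) (hb : b < K) :
    ∑ l ∈ Finset.range K, Real.cos (2 * Real.pi * ((b : ℝ) - (a : ℝ)) / K * l) =
      if a = b then (K : ℝ) else 0 := by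
  by_cases hab : a = b
  · subst hab
    simp
  · simp only [hab, if_false]
    set θ : ℝ := 2 * Real.pi * ((b : ℝ) - (a : ℝ)) / K with hθ
    set z : ℂ := Complex.exp (θ * Complex.I) with hz
    have hzl : ∀ l : ℕ, z ^ l = Complex.exp ((θ * l : ℝ) * Complex.I) := by
      intro l
      rw [hz, ← Complex.exp_nat_mul]
      congr 1
      push_cast
      ring
    have hz1 : z ≠ 1 := by
      intro h
      rw [hz, Complex.exp_eq_one_iff] at h
      obtain ⟨k, hk⟩ := h
      have hI : (θ : ℂ) = ((2 * Real.pi * k : ℝ) : ℂ) := by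
        apply mul_right_cancel₀ Complex.I_ne_zero
        rw [hk]; push_cast; ring
      have hreal : θ = 2 * Real.pi * k := by exact_mod_cast hI
      rw [hθ] at hreal
      have hKne : (K : ℝ) ≠ 0 := Nat.cast_ne_zero.mpr hK.ne'
      have hKpos : (0:ℝ) < K := by positivity
      have hpi : (0:ℝ) < Real.pi := Real.pi_pos
      have hcases : (b : ℝ) - (a : ℝ) = (k : ℝ) * K := by
        have h2 : 2 * Real.pi * ((b : ℝ) - (a : ℝ)) = 2 * Real.pi * ((k : ℝ) * K) := by
          rw [div_eq_iff hKne] at hreal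
          linarith [hreal]
        have h2pi : (2 * Real.pi) ≠ 0 := by positivity
        exact mul_left_cancel₀ h2pi h2
      have hint : (b : ℤ) - (a : ℤ) = k * K := by
        have := hcases
        push_cast at this ⊢
        exact_mod_cast this
      have habs : |(b : ℤ) - (a : ℤ)| < K := by
        rw [abs_lt]; omega
      have hne0 : (b : ℤ) - (a : ℤ) ≠ 0 := by omega
      rw [hint] at habs hne0
      have hk0 : k ≠ 0 := by
        intro h0; rw [h0] at hne0; simp at hne0
      have : (K : ℤ) ≤ |k * K| := by
        rw [abs_mul]
        calc (K : ℤ) = 1 * K := by ring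
          _ ≤ |k| * |(K : ℤ)| := by
              apply mul_le_mul
              · exact Int.one_le_abs hk0
              · simp
              · positivity
              · positivity
      omega
    have hgeom : ∑ l ∈ Finset.range K, z ^ l = 0 := by
      rw [geom_sum_eq hz1]
      have hzK : z ^ K = 1 := by
        rw [hzl K, hθ]
        have harg : (2 * Real.pi * ((b : ℝ) - (a : ℝ)) / K * K : ℝ) =
            2 * Real.pi * ((b : ℝ) - (a : ℝ)) := by
          field_simp
        rw [harg]
        have heq : ((2 * Real.pi * ((b : ℝ) - (a : ℝ)) : ℝ) : ℂ) * Complex.I =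
            ((((b : ℤ) - (a : ℤ)) : ℤ) : ℂ) * (2 * (Real.pi : ℂ) * Complex.I) := by
          push_cast; ring
        rw [heq]
        exact Complex.exp_int_mul_two_pi_mul_I _
      rw [hzK]
      simp
    have hre : ∀ l : ℕ, (z ^ l).re = Real.cos (θ * l) := by
      intro l
      rw [hzl l]
      exact_mod_cast Complex.exp_ofReal_mul_I_re (θ * l)
    calc ∑ l ∈ Finset.range K, Real.cos (2 * Real.pi * ((b : ℝ) - (a : ℝ)) / K * l)
        = ∑ l ∈ Finset.range K, (z ^ l).re := by
          apply Finset.sum_congr rfl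
          intro l _
          rw [hre l]
      _ = (∑ l ∈ Finset.range K, z ^ l).re := by
          rw [Complex.re_sum]
      _ = 0 := by rw [hgeom]; simp

section Master

variable {K : ℕ} (c : Fin n → Fin K)

/-- Mask of a matrix along a colouring. -/
def maskM (M : Matrix (Fin n) (Fin n) ℝ) : Matrix (Fin n) (Fin n) ℝ :=
  Matrix.of fun u v => if c u = c v then M u v else 0

/-- Twisted frame projections. -/
noncomputable def twist (P : Matrix (Fin n) (Fin n) ℝ) (l : ℕ) : Matrix (Fin n) (Fin n) ℝ :=
  Matrix.of fun u v =>
    P u v * Real.cos (2 * Real.pi * (((c v : ℕ) : ℝ) - ((c u : ℕ) : ℝ)) / K * l)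

lemma twist_frameProj {P : Matrix (Fin n) (Fin n) ℝ} {m : ℕ} (hP : FrameProj P m) (l : ℕ) :
    FrameProj (twist c P l) m := by
  have quadid : ∀ x : Fin n → ℝ,
      x ⬝ᵥ (twist c P l) *ᵥ x =
        (fun v => x v * Real.cos (2 * Real.pi * ((c v : ℕ) : ℝ) / K * l)) ⬝ᵥ
          P *ᵥ (fun v => x v * Real.cos (2 * Real.pi * ((c v : ℕ) : ℝ) / K * l)) +
        (fun v => x v * Real.sin (2 * Real.pi * ((c v : ℕ) : ℝ) / K * l)) ⬝ᵥ
          P *ᵥ (fun v => x v * Real.sin (2 * Real.pi * ((c v : ℕ) : ℝ) / K * l)) := by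
    intro x
    rw [quad_eq_sum, quad_eq_sum, quad_eq_sum, ← Finset.sum_add_distrib]
    apply Finset.sum_congr rfl
    intro u _
    rw [← Finset.sum_add_distrib]
    apply Finset.sum_congr rfl
    intro v _
    have hcos : Real.cos (2 * Real.pi * (((c v : ℕ) : ℝ) - ((c u : ℕ) : ℝ)) / K * l) =
        Real.cos (2 * Real.pi * ((c v : ℕ) : ℝ) / K * l) *
          Real.cos (2 * Real.pi * ((c u : ℕ) : ℝ) / K * l) +
        Real.sin (2 * Real.pi * ((c v : ℕ) : ℝ) / K * l) *
          Real.sin (2 * Real.pi * ((c u : ℕ) : ℝ) / K * l) := by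
      rw [← Real.cos_sub]
      congr 1
      ring
    simp only [twist, Matrix.of_apply]
    rw [hcos]
    ring
  constructor
  · intro x
    rw [quadid x]
    have := hP.nonneg (fun v => x v * Real.cos (2 * Real.pi * ((c v : ℕ) : ℝ) / K * l))
    have := hP.nonneg (fun v => x v * Real.sin (2 * Real.pi * ((c v : ℕ) : ℝ) / K * l))
    linarith
  · intro x
    rw [quadid x]
    have h1 := hP.le_one (fun v => x v * Real.cos (2 * Real.pi * ((c v : ℕ) : ℝ) / K * l))
    have h2 := hP.le_one (fun v => x v * Real.sin (2 * Real.pi * ((c v : ℕ) : ℝ) / K * l))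
    have hxx : ((fun v => x v * Real.cos (2 * Real.pi * ((c v : ℕ) : ℝ) / K * l)) ⬝ᵥ
          (fun v => x v * Real.cos (2 * Real.pi * ((c v : ℕ) : ℝ) / K * l))) +
        ((fun v => x v * Real.sin (2 * Real.pi * ((c v : ℕ) : ℝ) / K * l)) ⬝ᵥ
          (fun v => x v * Real.sin (2 * Real.pi * ((c v : ℕ) : ℝ) / K * l))) = x ⬝ᵥ x := by
      simp only [dotProduct, ← Finset.sum_add_distrib]
      apply Finset.sum_congr rfl
      intro v _
      have := Real.sin_sq_add_cos_sq (2 * Real.pi * ((c v : ℕ) : ℝ) / K * l)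
      nlinarith [this]
    linarith
  · have : (twist c P l).trace = P.trace := by
      rw [Matrix.trace, Matrix.trace]
      apply Finset.sum_congr rfl
      intro v _
      simp only [Matrix.diag, twist, Matrix.of_apply, sub_self]
      norm_num
    rw [this, hP.tr]

lemma twist_zero (P : Matrix (Fin n) (Fin n) ℝ) : twist c P 0 = P := by
  ext u v
  simp [twist]

lemma twist_sum (hK : 0 < K) (P : Matrix (Fin n) (Fin n) ℝ) :
    ∑ l ∈ Finset.range K, twist c P l = (K : ℝ) • maskM c P := by
  ext u v
  simp only [Finset.sum_apply, Matrix.sum_apply, twist, Matrix.of_apply, Matrix.smul_apply,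
    maskM, smul_eq_mul]
  rw [← Finset.mul_sum, cos_sum_eq K hK (c u : ℕ) (c v : ℕ) (c u).isLt (c v).isLt]
  rcases eq_or_ne (c u) (c v) with h | h
  · have hval : ((c u : ℕ)) = ((c v : ℕ)) := congrArg Fin.val h
    rw [if_pos hval, if_pos h]; ring
  · have hval : ¬ ((c u : ℕ)) = ((c v : ℕ)) := fun hh => h (Fin.ext hh)
    rw [if_neg hval, if_neg h]; ring

lemma trace_maskM_swap (M P : Matrix (Fin n) (Fin n) ℝ) :
    (M * maskM c P).trace = (maskM c M * P).trace := by
  rw [Matrix.trace, Matrix.trace]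
  simp only [Matrix.diag, mul_apply, maskM, Matrix.of_apply]
  apply Finset.sum_congr rfl
  intro u _
  apply Finset.sum_congr rfl
  intro v _
  by_cases h : c v = c u
  · have h' : c u = c v := h.symm
    rw [if_pos h, if_pos h']
  · have h' : ¬ (c u = c v) := fun hh => h hh.symm
    rw [if_neg h, if_neg h']
    ring

/-- The master pinching inequality. -/
lemma master {m : ℕ} (hm : 0 < m) (hmn : m ≤ n) {M P : Matrix (Fin n) (Fin n) ℝ}
    (hM : M.IsHermitian) (nu : Fin n → ℝ) (hanti : Antitone nu) (σ : Equiv.Perm (Fin n))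
    (hσ : nu = hM.eigenvalues ∘ σ) (hP : FrameProj P m) (hK : 0 < K) :
    (K : ℝ) * (maskM c M * P).trace - (M * P).trace ≤
      ((K : ℝ) - 1) * ∑ i ∈ univ.filter (fun i : Fin n => (i : ℕ) < m), nu i := by
  have hsum : ∑ l ∈ Finset.range K, (M * twist c P l).trace =
      (K : ℝ) * (maskM c M * P).trace := by
    calc ∑ l ∈ Finset.range K, (M * twist c P l).trace
        = (M * ∑ l ∈ Finset.range K, twist c P l).trace := by
          rw [Finset.mul_sum, Matrix.trace_sum]
      _ = (M * ((K : ℝ) • maskM c P)).trace := by rw [twist_sum c hK]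
      _ = (K : ℝ) * (M * maskM c P).trace := by
          rw [Matrix.mul_smul, Matrix.trace_smul]; rfl
      _ = (K : ℝ) * (maskM c M * P).trace := by rw [trace_maskM_swap]
  have hsplit : ∑ l ∈ Finset.range K, (M * twist c P l).trace =
      (M * P).trace + ∑ l ∈ Finset.Ico 1 K, (M * twist c P l).trace := by
    have : Finset.range K = insert 0 (Finset.Ico 1 K) := by
      ext l
      simp [Finset.mem_range, Finset.mem_Ico, Finset.mem_insert]
      omega
    rw [this, Finset.sum_insert (by simp)]
    rw [twist_zero]
  have hbound : ∑ l ∈ Finset.Ico 1 K, (M * twist c P l).trace ≤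
      ((K : ℝ) - 1) * ∑ i ∈ univ.filter (fun i : Fin n => (i : ℕ) < m), nu i := by
    have hcard : (Finset.Ico 1 K).card = K - 1 := by simp
    calc ∑ l ∈ Finset.Ico 1 K, (M * twist c P l).trace
        ≤ ∑ l ∈ Finset.Ico 1 K, ∑ i ∈ univ.filter (fun i : Fin n => (i : ℕ) < m), nu i := by
          apply Finset.sum_le_sum
          intro l _
          exact kyFan hm hmn hM nu hanti σ hσ (twist_frameProj c hP l)
      _ = ((K : ℝ) - 1) * ∑ i ∈ univ.filter (fun i : Fin n => (i : ℕ) < m), nu i := by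
          rw [Finset.sum_const, hcard, nsmul_eq_mul]
          congr 1
          have : (1 : ℕ) ≤ K := hK
          push_cast [Nat.cast_sub this]
          ring
  linarith [hsum, hsplit, hbound]

end Master

end SpecAux


namespace SpecAux2

open SpecAux ImproperPaper

variable {n : ℕ}

lemma ncard_to_card {p : Fin n → Prop} [DecidablePred p] :
    ({w | p w} : Set (Fin n)).ncard = (Finset.univ.filter p).card := by
  rw [Set.ncard_eq_toFinset_card']
  congr 1
  ext w
  simp

section Graph

variable (G : SimpleGraph (Fin n)) [DecidableRel G.Adj]

lemma adj_symm_entry (u v : Fin n) : G.adjMatrix ℝ u v = G.adjMatrix ℝ v u := by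
  simp [SimpleGraph.adjMatrix_apply, G.adj_comm]

/-- The masked adjacency matrix is `⪯ d·I` when every colour class has max degree `≤ d`. -/
lemma mask_adj_psd {K : ℕ} (c : Fin n → Fin K) (d : ℕ)
    (hrow : ∀ u : Fin n, (Finset.univ.filter (fun w => G.Adj u w ∧ c w = c u)).card ≤ d) :
    ((d : ℝ) • (1 : Matrix (Fin n) (Fin n) ℝ) - maskM c (G.adjMatrix ℝ)).PosSemidef := by
  set B : Matrix (Fin n) (Fin n) ℝ := maskM c (G.adjMatrix ℝ) with hB
  have hBsymm : ∀ u v, B u v = B v u := by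
    intro u v
    simp only [hB, maskM, Matrix.of_apply]
    by_cases h : c u = c v
    · rw [if_pos h, if_pos h.symm, adj_symm_entry]
    · rw [if_neg h, if_neg (fun hh => h hh.symm)]
  have hB0 : ∀ u v, 0 ≤ B u v := by
    intro u v
    simp only [hB, maskM, Matrix.of_apply]
    split
    · simp only [SimpleGraph.adjMatrix_apply]
      split <;> norm_num
    · exact le_refl _
  have hrowB : ∀ u, ∑ v, B u v ≤ (d : ℝ) := by
    intro u
    have : ∑ v, B u v =
        ((Finset.univ.filter (fun w => G.Adj u w ∧ c w = c u)).card : ℝ) := by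
      rw [Finset.card_filter]
      push_cast
      apply Finset.sum_congr rfl
      intro v _
      simp only [hB, maskM, Matrix.of_apply, SimpleGraph.adjMatrix_apply]
      by_cases h1 : c u = c v
      · by_cases h2 : G.Adj u v
        · rw [if_pos h1, if_pos h2, if_pos ⟨h2, h1.symm⟩]
        · rw [if_pos h1, if_neg h2, if_neg (fun hh => h2 hh.1)]
      · rw [if_neg h1]
        rw [if_neg (fun hh => h1 hh.2.symm)]
    rw [this]
    exact_mod_cast hrow u
  have hherm : ((d : ℝ) • (1 : Matrix (Fin n) (Fin n) ℝ) - B).IsHermitian := by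
    rw [Matrix.IsHermitian]
    ext u v
    simp only [Matrix.conjTranspose_apply, Matrix.sub_apply, Matrix.smul_apply, star_trivial]
    rw [hBsymm v u]
    congr 1
    rw [Matrix.one_apply, Matrix.one_apply]
    by_cases h : u = v
    · simp [h]
    · rw [if_neg (fun hh => h hh.symm), if_neg h]
  rw [Matrix.posSemidef_iff_dotProduct_mulVec]
  refine ⟨hherm, ?_⟩
  intro x
  have hquad : (star x) ⬝ᵥ (((d : ℝ) • (1 : Matrix (Fin n) (Fin n) ℝ) - B) *ᵥ x) =
      (d : ℝ) * (x ⬝ᵥ x) - x ⬝ᵥ B *ᵥ x := by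
    have hsx : star x = x := by
      funext i; exact star_trivial _
    rw [hsx, Matrix.sub_mulVec, dotProduct_sub, Matrix.smul_mulVec, Matrix.one_mulVec,
      dotProduct_smul, smul_eq_mul]
  rw [hquad]
  have hxBx : x ⬝ᵥ B *ᵥ x ≤ (d : ℝ) * (x ⬝ᵥ x) := by
    rw [quad_eq_sum]
    have step1 : ∑ u, ∑ v, x u * B u v * x v ≤
        ∑ u, ∑ v, B u v * ((x u)^2 + (x v)^2) / 2 := by
      apply Finset.sum_le_sum; intro u _
      apply Finset.sum_le_sum; intro v _
      have h1 : x u * x v ≤ ((x u)^2 + (x v)^2) / 2 := by nlinarith [sq_nonneg (x u - x v)]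
      have h2 : 0 ≤ B u v := hB0 u v
      calc x u * B u v * x v = B u v * (x u * x v) := by ring
        _ ≤ B u v * (((x u)^2 + (x v)^2) / 2) := by
            exact mul_le_mul_of_nonneg_left h1 h2
        _ = B u v * ((x u)^2 + (x v)^2) / 2 := by ring
    have step2 : ∑ u, ∑ v, B u v * ((x u)^2 + (x v)^2) / 2 =
        ∑ u, (∑ v, B u v) * (x u)^2 := by
      simp only [mul_add, add_div, Finset.sum_add_distrib]
      have e2 : ∑ u, ∑ v, B u v * (x v)^2 / 2 = ∑ u, ∑ v, B u v * (x u)^2 / 2 := by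
        rw [Finset.sum_comm]
        apply Finset.sum_congr rfl; intro u _
        apply Finset.sum_congr rfl; intro v _
        rw [hBsymm]
      rw [e2, ← Finset.sum_add_distrib]
      apply Finset.sum_congr rfl; intro u _
      rw [← Finset.sum_add_distrib, Finset.sum_mul]
      apply Finset.sum_congr rfl; intro v _
      ring
    have step3 : ∑ u, (∑ v, B u v) * (x u)^2 ≤ ∑ u, (d : ℝ) * (x u)^2 := by
      apply Finset.sum_le_sum; intro u _
      exact mul_le_mul_of_nonneg_right (hrowB u) (sq_nonneg _)
    have step4 : ∑ u, (d : ℝ) * (x u)^2 = (d : ℝ) * (x ⬝ᵥ x) := by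
      rw [← Finset.mul_sum]
      congr 1
      simp [dotProduct, pow_two]
    linarith
  linarith


lemma trace_mask_le {K : ℕ} (c : Fin n → Fin K) (d : ℕ)
    (hrow : ∀ u : Fin n, (Finset.univ.filter (fun w => G.Adj u w ∧ c w = c u)).card ≤ d)
    {P : Matrix (Fin n) (Fin n) ℝ} {m : ℕ} (hP : FrameProj P m) :
    (maskM c (G.adjMatrix ℝ) * P).trace ≤ (d : ℝ) * m := by
  have hpsd := mask_adj_psd G c d hrow
  have h0 := trace_psd_nonneg hpsd hP
  have hexp : (((d : ℝ) • (1 : Matrix (Fin n) (Fin n) ℝ) - maskM c (G.adjMatrix ℝ)) * P).trace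
      = (d : ℝ) * P.trace - (maskM c (G.adjMatrix ℝ) * P).trace := by
    rw [Matrix.sub_mul, Matrix.trace_sub, Matrix.smul_mul, Matrix.one_mul, Matrix.trace_smul,
      smul_eq_mul]
  rw [hexp, hP.tr] at h0
  linarith

lemma mask_lap (G : SimpleGraph (Fin n)) [DecidableRel G.Adj] {K : ℕ} (c : Fin n → Fin K) :
    maskM c (G.lapMatrix ℝ) = G.degMatrix ℝ - maskM c (G.adjMatrix ℝ) := by
  ext u v
  simp only [maskM, Matrix.of_apply, Matrix.sub_apply, SimpleGraph.lapMatrix,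
    Matrix.sub_apply]
  by_cases h : c u = c v
  · rw [if_pos h, if_pos h]
  · rw [if_neg h, if_neg h]
    by_cases huv : u = v
    · exact absurd (by rw [huv]) h
    · rw [SimpleGraph.degMatrix, Matrix.diagonal_apply_ne _ huv]
      ring

lemma mask_lap_id (G : SimpleGraph (Fin n)) [DecidableRel G.Adj] :
    maskM (fun v : Fin n => v) (G.lapMatrix ℝ) = G.degMatrix ℝ := by
  ext u v
  simp only [maskM, Matrix.of_apply, SimpleGraph.lapMatrix, Matrix.sub_apply]
  by_cases h : u = v
  · subst h
    rw [if_pos rfl]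
    simp [SimpleGraph.degMatrix]
  · rw [if_neg h, SimpleGraph.degMatrix, Matrix.diagonal_apply_ne _ h]

end Graph

end SpecAux2

open ImproperPaper in

theorem stmt_15 {n : ℕ} (G : SimpleGraph (Fin n)) [DecidableRel G.Adj] (d m : ℕ)
    (hd : 0 < d) (hm : 0 < m) (hmn : m ≤ n)
    (hA : (G.adjMatrix ℝ).IsHermitian) (lam : Fin n → ℝ) (hlam : IsEigList hA lam)
    (hL : (G.lapMatrix ℝ).IsHermitian) (mu : Fin n → ℝ) (hmu : IsEigList hL mu)
    (hQ : (G.degMatrix ℝ + G.adjMatrix ℝ).IsHermitian) (th : Fin n → ℝ)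
    (hth : IsEigList hQ th) :
    1 + (-(d * m : ℝ) + ∑ i ∈ Finset.univ.filter (fun i : Fin n => (i : ℕ) < m), lam i) /
        ((d * m : ℝ) +
          ∑ i ∈ Finset.univ.filter (fun i : Fin n => (i : ℕ) < m), (lam i + mu i - th i)) ≤
      (improperChromaticNumber G d : ℝ) := by
  classical
  obtain ⟨hanti_l, σl, hσl⟩ := hlam
  obtain ⟨hanti_m, σm, hσm⟩ := hmu
  obtain ⟨hanti_q, σq, hσq⟩ := hth
  have npos : 0 < n := lt_of_lt_of_le hm hmn
  -- the colouring realizing the improper chromatic number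
  have hne : ∃ c : Fin n → Fin n, IsImproperColoring G d c := by
    refine ⟨fun v => v, fun v => ?_⟩
    have hempty : ({w | G.Adj v w ∧ (fun x : Fin n => x) w = (fun x : Fin n => x) v} :
        Set (Fin n)) = ∅ := by
      ext w
      simp only [Set.mem_setOf_eq, Set.mem_empty_iff_false, iff_false, not_and]
      intro hadj hw
      subst hw
      exact G.loopless.irrefl _ hadj
    rw [hempty]
    simp
  set kN := improperChromaticNumber G d with hkN
  have hmem : kN ∈ {N : ℕ | ∃ c0 : Fin n → Fin N, IsImproperColoring G d c0} :=
    Nat.sInf_mem ⟨n, hne⟩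
  obtain ⟨c, hc⟩ := hmem
  have hk1 : 1 ≤ kN := by
    by_contra h
    have h0 : kN = 0 := by omega
    rw [h0] at c
    exact (c ⟨0, npos⟩).elim0
  have hrow : ∀ u : Fin n, (Finset.univ.filter (fun w => G.Adj u w ∧ c w = c u)).card ≤ d := by
    intro u
    have := hc u
    rwa [SpecAux2.ncard_to_card] at this
  -- notation
  set Slam : ℝ := ∑ i ∈ Finset.univ.filter (fun i : Fin n => (i : ℕ) < m), lam i with hSlam
  set Smu : ℝ := ∑ i ∈ Finset.univ.filter (fun i : Fin n => (i : ℕ) < m), mu i with hSmu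
  set Sth : ℝ := ∑ i ∈ Finset.univ.filter (fun i : Fin n => (i : ℕ) < m), th i with hSth
  set kr : ℝ := (kN : ℝ) with hkr
  set dm : ℝ := ((d : ℝ) * (m : ℝ)) with hdm
  -- the projector onto the top-m eigenvectors of Q
  set S : Finset (Fin n) :=
    (Finset.univ.filter (fun i : Fin n => (i : ℕ) < m)).image σq with hS
  have hcardS : S.card = m := by
    rw [hS, Finset.card_image_of_injective _ σq.injective, SpecAux.card_filter_lt hmn]
  set P : Matrix (Fin n) (Fin n) ℝ := SpecAux.projOf hQ S with hP
  have hPfp : SpecAux.FrameProj P m := by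
    have := SpecAux.projOf_frameProj hQ S
    rwa [hcardS] at this
  have hQtr : ((G.degMatrix ℝ + G.adjMatrix ℝ) * P).trace = Sth := by
    rw [hP, SpecAux.trace_mul_projOf hQ S, hS,
      Finset.sum_image (fun x _ y _ h => σq.injective h), hSth]
    apply Finset.sum_congr rfl
    intro i _
    rw [hσq]
    rfl
  set tD : ℝ := (G.degMatrix ℝ * P).trace with htD
  set tA : ℝ := (G.adjMatrix ℝ * P).trace with htA2
  set tB : ℝ := (SpecAux.maskM c (G.adjMatrix ℝ) * P).trace with htB2
  set tL : ℝ := (G.lapMatrix ℝ * P).trace with htL2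
  have h1 : tD + tA = Sth := by
    rw [htD, htA2, ← Matrix.trace_add, ← Matrix.add_mul]
    exact hQtr
  have h2 : tA ≤ Slam := SpecAux.kyFan hm hmn hA lam hanti_l σl hσl hPfp
  have h3 : tL ≤ Smu := SpecAux.kyFan hm hmn hL mu hanti_m σm hσm hPfp
  have h4 : tL = tD - tA := by
    rw [htL2, htD, htA2, ← Matrix.trace_sub, ← Matrix.sub_mul]
    rfl
  -- the identity colouring gives tD ≤ Smu
  have hmid := SpecAux.master (fun v : Fin n => v) hm hmn hL mu hanti_m σm hσm hPfp npos
  rw [SpecAux2.mask_lap_id G, ← hSmu, ← htD, ← htL2] at hmid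
  have htDle : tD ≤ Smu := by
    have hnr : (0 : ℝ) < (n : ℝ) := by exact_mod_cast npos
    have e : ((n : ℝ) - 1) * Smu = (n : ℝ) * Smu - Smu := by ring
    rw [e] at hmid
    have : (n : ℝ) * tD ≤ (n : ℝ) * Smu := by linarith
    exact le_of_mul_le_mul_left this hnr
  -- the colouring master inequality
  have hkpos : 0 < kN := hk1
  have hmc := SpecAux.master c hm hmn hL mu hanti_m σm hσm hPfp hkpos
  rw [SpecAux2.mask_lap G c, Matrix.sub_mul, Matrix.trace_sub, ← hSmu, ← htD, ← htB2,
    ← htL2, ← hkr] at hmc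
  -- now hmc : kr * (tD - tB) - tL ≤ (kr - 1) * Smu
  have htBle : tB ≤ dm := SpecAux2.trace_mask_le G c d hrow hPfp
  -- KEY inequality
  have key : (kr - 1) * Sth ≤ kr * dm + (kr - 2) * Slam + (kr - 1) * Smu := by
    rcases (by omega : 2 ≤ kN ∨ kN = 1) with hk2 | hk2
    · have hkr2 : (2 : ℝ) ≤ kr := by rw [hkr]; exact_mod_cast hk2
      have e1 : (kr - 2) * tA ≤ (kr - 2) * Slam :=
        mul_le_mul_of_nonneg_left h2 (by linarith)
      have e2 : kr * tB ≤ kr * dm :=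
        mul_le_mul_of_nonneg_left htBle (by linarith)
      rw [← h1]
      nlinarith [hmc, e1, e2, h4, h3]
    · -- kN = 1 : the whole graph has max degree ≤ d, so Slam ≤ dm
      have hkr1 : kr = 1 := by rw [hkr, hk2]; norm_num
      have hcc : ∀ u v : Fin n, c u = c v := by
        intro u v
        apply Fin.ext
        have hu := (c u).isLt
        have hv := (c v).isLt
        omega
      have hBA : SpecAux.maskM c (G.adjMatrix ℝ) = G.adjMatrix ℝ := by
        ext u v
        simp only [SpecAux.maskM, Matrix.of_apply]
        rw [if_pos (hcc u v)]
      set SA : Finset (Fin n) :=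
        (Finset.univ.filter (fun i : Fin n => (i : ℕ) < m)).image σl with hSA
      have hcardSA : SA.card = m := by
        rw [hSA, Finset.card_image_of_injective _ σl.injective, SpecAux.card_filter_lt hmn]
      have hPA : SpecAux.FrameProj (SpecAux.projOf hA SA) m := by
        have := SpecAux.projOf_frameProj hA SA
        rwa [hcardSA] at this
      have hAtr : (G.adjMatrix ℝ * SpecAux.projOf hA SA).trace = Slam := by
        rw [SpecAux.trace_mul_projOf hA SA, hSA,
          Finset.sum_image (fun x _ y _ h => σl.injective h), hSlam]
        apply Finset.sum_congr rfl
        intro i _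
        rw [hσl]
        rfl
      have hSlamle : Slam ≤ dm := by
        have hb := SpecAux2.trace_mask_le G c d hrow hPA
        rw [hBA, hAtr] at hb
        exact hb
      rw [hkr1]
      norm_num
      linarith
  -- denominator
  have hsplit : ∑ i ∈ Finset.univ.filter (fun i : Fin n => (i : ℕ) < m),
      (lam i + mu i - th i) = Slam + Smu - Sth := by
    rw [hSlam, hSmu, hSth, ← Finset.sum_add_distrib, ← Finset.sum_sub_distrib]
  have hdmpos : 0 < dm := by
    rw [hdm]
    have h1' : (0:ℝ) < (d:ℝ) := by exact_mod_cast hd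
    have h2' : (0:ℝ) < (m:ℝ) := by exact_mod_cast hm
    positivity
  have hDpos : 0 < dm + (Slam + Smu - Sth) := by
    have : Sth ≤ Smu + Slam := by linarith [htDle, h2, h1]
    linarith
  have hgoal2 : (-dm + Slam) / (dm + (Slam + Smu - Sth)) ≤ kr - 1 := by
    rw [div_le_iff₀ hDpos]
    nlinarith [key]
  rw [hsplit]
  linarith [hgoal2]
end

section
/- Let A be the adjacency matrix of a finite simple graph G on n vertices with χ^d(G) = c ≥ 2 for an integer d ≥ 0. Then for every real diagonal n × n matrix X and every m with 1 ≤ m ≤ n, Σ_{i=1}^m λ_i^↓(X − A) ≥ Σ_{i=1}^m λ_i^↓(X + A/(c−1)) − cdm/(c−1), where λ_i^↓(M) denotes the i-th largest eigenvalue of a real symmetric matrix M. -/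
open SimpleGraph Finset Matrix

section EigHelpers

open Finset Matrix Complex


lemma card_filter_lt_fin {n m : ℕ} (hmn : m ≤ n) :
    (Finset.univ.filter (fun j : Fin n => (j : ℕ) < m)).card = m := by
  have : (Finset.univ.filter (fun j : Fin n => (j : ℕ) < m))
      = Finset.map (Fin.castLEEmb hmn) Finset.univ := by
    ext j
    simp only [mem_filter, mem_univ, true_and, Finset.mem_map, Fin.castLEEmb_apply]
    constructor
    · intro hj; exact ⟨⟨j, hj⟩, by simp [Fin.ext_iff]⟩
    · rintro ⟨i, rfl⟩; simpa using i.2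
  rw [this, Finset.card_map, Finset.card_univ, Fintype.card_fin]

lemma majorize {n m : ℕ} (hn : 0 < n) (hmn : m ≤ n) (al p : Fin n → ℝ) (hal : Antitone al)
    (hp0 : ∀ j, 0 ≤ p j) (hp1 : ∀ j, p j ≤ 1) (hps : ∑ j, p j = m) :
    ∑ j, al j * p j ≤ ∑ j ∈ Finset.univ.filter (fun j : Fin n => (j : ℕ) < m), al j := by
  have hjt : min m (n - 1) < n := lt_of_le_of_lt (min_le_right _ _) (Nat.sub_lt hn one_pos)
  set jt : Fin n := ⟨min m (n - 1), hjt⟩ with hjtdef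
  set t : ℝ := al jt with htdef
  have hcard : (Finset.univ.filter (fun j : Fin n => (j : ℕ) < m)).card = m :=
    card_filter_lt_fin hmn
  have hpoint : ∀ j : Fin n, al j * p j ≤
      (if (j : ℕ) < m then al j else 0) + t * (p j - (if (j : ℕ) < m then 1 else 0)) := by
    intro j
    by_cases hj : (j : ℕ) < m
    · simp only [hj, if_pos]
      have h1 : t ≤ al j := by
        apply hal
        show (j : ℕ) ≤ min m (n - 1)
        exact le_min (Nat.le_of_lt hj) (Nat.le_sub_one_of_lt j.2)
      nlinarith [hp1 j, hp0 j]
    · simp only [hj, if_neg, not_false_iff]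
      have h1 : al j ≤ t := by
        apply hal
        show min m (n - 1) ≤ (j : ℕ)
        exact le_trans (min_le_left _ _) (Nat.le_of_not_lt hj)
      nlinarith [hp0 j]
  have hsum := Finset.sum_le_sum (fun j (_ : j ∈ Finset.univ) => hpoint j)
  have e1 : ∑ j : Fin n, (if (j : ℕ) < m then al j else 0)
      = ∑ j ∈ Finset.univ.filter (fun j : Fin n => (j : ℕ) < m), al j :=
    (Finset.sum_filter _ _).symm
  have e2 : ∑ j : Fin n, (if (j : ℕ) < m then (1 : ℝ) else 0) = m := by
    rw [Finset.sum_boole, hcard]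
  have e3 : ∑ j : Fin n, t * (p j - (if (j : ℕ) < m then (1:ℝ) else 0))
      = t * ((∑ j, p j) - ∑ j : Fin n, (if (j : ℕ) < m then (1:ℝ) else 0)) := by
    rw [← Finset.mul_sum, Finset.sum_sub_distrib]
  rw [Finset.sum_add_distrib, e1, e3, hps, e2, sub_self, mul_zero, add_zero] at hsum
  exact hsum



section CharSum

variable {c : ℕ}

noncomputable def omC (c : ℕ) : ℂ := Complex.exp (2 * Real.pi * Complex.I / c)

lemma omC_prim (hc : c ≠ 0) : IsPrimitiveRoot (omC c) c :=
  Complex.isPrimitiveRoot_exp c hc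

lemma omC_normSq (hc : c ≠ 0) (t : ℕ) : (omC c) ^ t * (starRingEnd ℂ) ((omC c) ^ t) = 1 := by
  have h1 : (omC c) ^ c = 1 := (omC_prim hc).pow_eq_one
  have habs : ‖omC c‖ = 1 := by
    have h2 : (‖omC c‖) ^ c = 1 := by
      rw [← norm_pow, h1, norm_one]
    have h3 : (0:ℝ) ≤ ‖omC c‖ := norm_nonneg _
    rcases (pow_eq_one_iff_cases.mp h2) with h | h | h
    · omega
    · exact h
    · exfalso; rw [h.1] at h3; linarith
  rw [Complex.mul_conj]
  have : Complex.normSq ((omC c) ^ t) = 1 := by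
    rw [_root_.map_pow, Complex.normSq_eq_norm_sq, habs]; simp
  rw [this]; norm_num

lemma char_sum (hc2 : 2 ≤ c) (a b : Fin c) :
    ∑ k ∈ Finset.Ico 1 c, ((omC c) ^ (a:ℕ) * (starRingEnd ℂ) ((omC c) ^ (b:ℕ))) ^ k
      = (if a = b then (c:ℂ) else 0) - 1 := by
  have hc0 : c ≠ 0 := by omega
  set ζ : ℂ := (omC c) ^ (a:ℕ) * (starRingEnd ℂ) ((omC c) ^ (b:ℕ)) with hζ
  have hsplit : ∑ k ∈ Finset.range c, ζ ^ k = ζ ^ 0 + ∑ k ∈ Finset.Ico 1 c, ζ ^ k := by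
    rw [Finset.range_eq_Ico]
    exact Finset.sum_eq_sum_Ico_succ_bot (by omega) _
  have hrange : ∑ k ∈ Finset.range c, ζ ^ k = if a = b then (c:ℂ) else 0 := by
    by_cases hab : a = b
    · subst hab
      have : ζ = 1 := omC_normSq hc0 a
      simp [this]
    · have hζc : ζ ^ c = 1 := by
        rw [hζ, mul_pow, ← pow_mul, mul_comm (a:ℕ) c, pow_mul, (omC_prim hc0).pow_eq_one,
          one_pow, one_mul, ← _root_.map_pow, ← pow_mul, mul_comm (b:ℕ) c, pow_mul,
          (omC_prim hc0).pow_eq_one, one_pow, _root_.map_one]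
      have hζ1 : ζ ≠ 1 := by
        intro h
        apply hab
        have h2 : (omC c) ^ (a:ℕ) = (omC c) ^ (b:ℕ) := by
          have h3 : ζ * (omC c) ^ (b:ℕ) = (omC c) ^ (b:ℕ) := by rw [h, one_mul]
          rw [hζ, mul_assoc] at h3
          have h4 : (starRingEnd ℂ) ((omC c) ^ (b:ℕ)) * (omC c) ^ (b:ℕ) = 1 := by
            rw [mul_comm]; exact omC_normSq hc0 b
          rw [h4, mul_one] at h3
          exact h3
        exact Fin.ext ((omC_prim hc0).pow_inj a.2 b.2 h2)
      rw [geom_sum_eq hζ1, hζc, sub_self, zero_div, if_neg hab]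
  rw [hsplit] at hrange
  rw [pow_zero] at hrange
  linear_combination hrange


end CharSum

lemma eigen_decomp {n : ℕ} {M : Matrix (Fin n) (Fin n) ℝ} (hM : M.IsHermitian)
    (σ : Equiv.Perm (Fin n)) :
    ∃ w : Fin n → (Fin n → ℝ),
      (∀ j k, ∑ v, w j v * w k v = if j = k then 1 else 0) ∧
      (∀ u v, ∑ j, w j u * w j v = if u = v then 1 else 0) ∧
      (∀ j, M *ᵥ w j = (hM.eigenvalues (σ j)) • w j) ∧
      (∀ u v, M u v = ∑ j, (hM.eigenvalues (σ j)) * w j u * w j v) := by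
  set w : Fin n → (Fin n → ℝ) := fun j => ⇑(hM.eigenvectorBasis (σ j)) with hw
  have horth : ∀ j k, ∑ v, w j v * w k v = if j = k then 1 else 0 := by
    intro j k
    have h := orthonormal_iff_ite.mp hM.eigenvectorBasis.orthonormal (σ j) (σ k)
    rw [PiLp.inner_apply] at h
    simp only [RCLike.inner_apply, conj_trivial] at h
    show ∑ v, (hM.eigenvectorBasis (σ j)) v * (hM.eigenvectorBasis (σ k)) v = _
    rw [show ∑ v, (hM.eigenvectorBasis (σ j)) v * (hM.eigenvectorBasis (σ k)) v = ∑ v, (hM.eigenvectorBasis (σ k)) v * (hM.eigenvectorBasis (σ j)) v from Finset.sum_congr rfl fun v _ => mul_comm _ _, h]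
    by_cases hjk : j = k
    · simp [hjk]
    · rw [if_neg hjk, if_neg (fun hσ => hjk (σ.injective hσ))]
  have hmv : ∀ j, M *ᵥ w j = (hM.eigenvalues (σ j)) • w j := fun j =>
    hM.mulVec_eigenvectorBasis (σ j)
  set W : Matrix (Fin n) (Fin n) ℝ := Matrix.of (fun j v => w j v) with hW
  have hWWt : W * Wᵀ = 1 := by
    ext j k
    simp only [Matrix.mul_apply, Matrix.transpose_apply, Matrix.one_apply, hW, Matrix.of_apply]
    exact horth j k
  have hWtW : Wᵀ * W = 1 := mul_eq_one_comm.mp hWWt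
  have hcomp : ∀ u v, ∑ j, w j u * w j v = if u = v then 1 else 0 := by
    intro u v
    have := congrFun (congrFun hWtW u) v
    simp only [Matrix.mul_apply, Matrix.transpose_apply, Matrix.one_apply, hW,
      Matrix.of_apply] at this
    rw [← this]
  refine ⟨w, horth, hcomp, hmv, ?_⟩
  intro u v
  have hMW : M = (M * Wᵀ) * W := by rw [Matrix.mul_assoc, hWtW, Matrix.mul_one]
  have inner : ∀ j, ∑ x, M u x * w j x = hM.eigenvalues (σ j) * w j u := by
    intro j
    have := congrFun (hmv j) u
    simp only [Matrix.mulVec, dotProduct, Pi.smul_apply, smul_eq_mul] at this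
    exact this
  conv_lhs => rw [hMW]
  simp only [Matrix.mul_apply, Matrix.transpose_apply, hW, Matrix.of_apply]
  refine Finset.sum_congr rfl fun j _ => ?_
  rw [inner j, mul_assoc]

lemma quad_bound {n m : ℕ} (hn : 0 < n) (hmn : m ≤ n)
    {M : Matrix (Fin n) (Fin n) ℝ}
    (al : Fin n → ℝ) (hal : Antitone al)
    (w : Fin n → Fin n → ℝ)
    (hw1 : ∀ j k, ∑ v, w j v * w k v = if j = k then (1:ℝ) else 0)
    (hw2 : ∀ u v, ∑ j, w j u * w j v = if u = v then (1:ℝ) else 0)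
    (hM : ∀ u v, M u v = ∑ j, al j * w j u * w j v)
    {ι : Type*} [DecidableEq ι] (s : Finset ι) (hs : s.card = m)
    (z : ι → Fin n → ℂ)
    (hz : ∀ i ∈ s, ∀ i' ∈ s, ∑ v, (starRingEnd ℂ) (z i v) * z i' v
      = if i = i' then (1:ℂ) else 0) :
    (∑ i ∈ s, ∑ u, ∑ v, (starRingEnd ℂ) (z i u) * (M u v : ℂ) * z i v).re
      ≤ ∑ j ∈ Finset.univ.filter (fun j : Fin n => (j : ℕ) < m), al j := by
  classical
  set t : ι → Fin n → ℂ := fun i j => ∑ v, (w j v : ℂ) * z i v with ht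
  have hconj_t : ∀ i j, (starRingEnd ℂ) (t i j) = ∑ u, (w j u : ℂ) * (starRingEnd ℂ) (z i u) := by
    intro i j
    rw [ht]
    simp only [map_sum, _root_.map_mul, Complex.conj_ofReal]
  have step1 : ∀ i, ∑ u, ∑ v, (starRingEnd ℂ) (z i u) * (M u v : ℂ) * z i v
      = ∑ j, (al j : ℂ) * ((starRingEnd ℂ) (t i j) * t i j) := by
    intro i
    have key : ∀ j, (al j : ℂ) * ((starRingEnd ℂ) (t i j) * t i j)
        = ∑ u, ∑ v, (al j : ℂ) * ((w j u : ℂ) * (starRingEnd ℂ) (z i u))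
            * ((w j v : ℂ) * z i v) := by
      intro j
      rw [hconj_t, ht, Finset.sum_mul_sum, Finset.mul_sum]
      refine Finset.sum_congr rfl fun u _ => ?_
      rw [Finset.mul_sum]
      exact Finset.sum_congr rfl fun v _ => by ring
    symm
    rw [Finset.sum_congr rfl fun j (_ : j ∈ Finset.univ) => key j]
    rw [Finset.sum_comm]
    refine Finset.sum_congr rfl fun u _ => ?_
    rw [Finset.sum_comm]
    refine Finset.sum_congr rfl fun v _ => ?_
    rw [hM u v]
    push_cast
    rw [Finset.mul_sum, Finset.sum_mul]
    exact Finset.sum_congr rfl fun j _ => by ring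
  set q : ι → Fin n → ℝ := fun i j => Complex.normSq (t i j) with hq
  have step2 : ∀ i, (∑ u, ∑ v, (starRingEnd ℂ) (z i u) * (M u v : ℂ) * z i v).re
      = ∑ j, al j * q i j := by
    intro i
    rw [step1 i]
    rw [Complex.re_sum]
    refine Finset.sum_congr rfl fun j _ => ?_
    have : (starRingEnd ℂ) (t i j) * t i j = ((q i j : ℝ) : ℂ) := by
      rw [mul_comm, Complex.mul_conj]
    rw [this, ← Complex.ofReal_mul, Complex.ofReal_re]
  set p : Fin n → ℝ := fun j => ∑ i ∈ s, q i j with hp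
  -- the key inner products
  set E := EuclideanSpace ℂ (Fin n)
  set Z : {i // i ∈ s} → E := fun i => (WithLp.equiv 2 _).symm (z i) with hZ
  have hZon : Orthonormal ℂ Z := by
    rw [orthonormal_iff_ite]
    intro i i'
    rw [PiLp.inner_apply]
    simp only [hZ, WithLp.equiv_symm_apply, PiLp.toLp_apply, RCLike.inner_apply, RCLike.star_def]
    rw [Finset.sum_congr rfl fun v _ => mul_comm (z i'.1 v) ((starRingEnd ℂ) (z i.1 v)), hz i.1 i.2 i'.1 i'.2]
    simp only [← Subtype.ext_iff]
  have hp1' : ∀ j, p j ≤ 1 := by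
    intro j
    set X : E := (WithLp.equiv 2 _).symm (fun v => (w j v : ℂ)) with hX
    have hb := hZon.sum_inner_products_le (s := Finset.univ) X
    have hnormX : ‖X‖ ^ 2 = 1 := by
      rw [EuclideanSpace.norm_eq]
      rw [Real.sq_sqrt (by positivity)]
      have : ∀ v, ‖X v‖ ^ 2 = w j v * w j v := by
        intro v
        simp only [hX, WithLp.equiv_symm_apply, PiLp.toLp_apply, Complex.sq_norm,
          Complex.normSq_ofReal]
      rw [Finset.sum_congr rfl fun v _ => this v, hw1 j j, if_pos rfl]
    have hinner : ∀ i : {i // i ∈ s}, ‖(inner ℂ (Z i) X : ℂ)‖ ^ 2 = q i.1 j := by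
      intro i
      have : (inner ℂ (Z i) X : ℂ) = (starRingEnd ℂ) (t i.1 j) := by
        rw [PiLp.inner_apply, hconj_t]
        simp only [hZ, hX, WithLp.equiv_symm_apply, PiLp.toLp_apply, RCLike.inner_apply, RCLike.star_def]
      rw [this]
      rw [Complex.sq_norm, Complex.normSq_conj]
    rw [hnormX] at hb
    rw [Finset.sum_congr rfl (fun i (_ : i ∈ Finset.univ) => hinner i)] at hb
    show ∑ i ∈ s, q i j ≤ 1
    rw [← Finset.sum_coe_sort s (fun i => q i j)]
    exact hb
  have hp0' : ∀ j, 0 ≤ p j :=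
    fun j => Finset.sum_nonneg fun i _ => Complex.normSq_nonneg _
  have hrow : ∀ i ∈ s, ∑ j, q i j = 1 := by
    intro i hi
    have hC : ∑ j, (starRingEnd ℂ) (t i j) * t i j = 1 := by
      have key : ∀ j, (starRingEnd ℂ) (t i j) * t i j
          = ∑ u, ∑ v, ((w j u : ℂ) * (w j v : ℂ))
              * ((starRingEnd ℂ) (z i u) * z i v) := by
        intro j
        rw [hconj_t, ht, Finset.sum_mul_sum]
        exact Finset.sum_congr rfl fun u _ =>
          Finset.sum_congr rfl fun v _ => by ring
      rw [Finset.sum_congr rfl fun j (_ : j ∈ Finset.univ) => key j]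
      rw [Finset.sum_comm]
      have inner1 : ∀ u, ∑ j, ∑ v, ((w j u : ℂ) * (w j v : ℂ))
          * ((starRingEnd ℂ) (z i u) * z i v)
          = (starRingEnd ℂ) (z i u) * z i u := by
        intro u
        rw [Finset.sum_comm]
        have : ∀ v, ∑ j, ((w j u : ℂ) * (w j v : ℂ)) * ((starRingEnd ℂ) (z i u) * z i v)
            = (if u = v then (1:ℂ) else 0) * ((starRingEnd ℂ) (z i u) * z i v) := by
          intro v
          rw [← Finset.sum_mul]
          congr 1
          have : ∑ j, (w j u : ℂ) * (w j v : ℂ) = ((∑ j, w j u * w j v : ℝ) : ℂ) := by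
            push_cast; rfl
          rw [this, hw2 u v]
          split_ifs <;> norm_num
        rw [Finset.sum_congr rfl fun v (_ : v ∈ Finset.univ) => this v]
        simp
      rw [Finset.sum_congr rfl fun u (_ : u ∈ Finset.univ) => inner1 u]
      exact hz i hi i hi |>.trans (if_pos rfl)
    have : ∑ j, q i j = (∑ j, (starRingEnd ℂ) (t i j) * t i j).re := by
      rw [Complex.re_sum]
      refine Finset.sum_congr rfl fun j _ => ?_
      rw [mul_comm, Complex.mul_conj, Complex.ofReal_re]
    rw [this, hC, Complex.one_re]
  have hps : ∑ j, p j = m := by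
    rw [hp]
    rw [Finset.sum_comm]
    rw [Finset.sum_congr rfl hrow]
    rw [Finset.sum_const, hs, nsmul_eq_mul, mul_one]
  have final : (∑ i ∈ s, ∑ u, ∑ v, (starRingEnd ℂ) (z i u) * (M u v : ℂ) * z i v).re
      = ∑ j, al j * p j := by
    rw [Complex.re_sum]
    rw [Finset.sum_congr rfl fun i (_ : i ∈ s) => step2 i]
    rw [Finset.sum_comm]
    refine Finset.sum_congr rfl fun j _ => ?_
    exact (Finset.mul_sum s (fun i => q i j) (al j)).symm
  rw [final]
  exact majorize hn hmn al p hal hp0' hp1' hps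

end EigHelpers

open ImproperPaper in

theorem stmt_16 {n : ℕ} (G : SimpleGraph (Fin n)) [DecidableRel G.Adj] (d c m : ℕ)
    (hc : improperChromaticNumber G d = c) (hc2 : 2 ≤ c) (hm : 1 ≤ m) (hmn : m ≤ n)
    (X : Matrix (Fin n) (Fin n) ℝ) (hX : X.IsDiag)
    (h1 : (X - G.adjMatrix ℝ).IsHermitian) (al : Fin n → ℝ) (hal : IsEigList h1 al)
    (h2 : (X + ((c : ℝ) - 1)⁻¹ • G.adjMatrix ℝ).IsHermitian) (be : Fin n → ℝ)
    (hbe : IsEigList h2 be) :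
    (∑ i ∈ Finset.univ.filter (fun i : Fin n => (i : ℕ) < m), be i) -
        (c : ℝ) * d * m / ((c : ℝ) - 1) ≤
      ∑ i ∈ Finset.univ.filter (fun i : Fin n => (i : ℕ) < m), al i := by
  classical
  have hn : 0 < n := lt_of_lt_of_le hm hmn
  have hc0 : c ≠ 0 := by omega
  have hcR : (2:ℝ) ≤ (c:ℝ) := by exact_mod_cast hc2
  have hcpos : (0:ℝ) < (c:ℝ) - 1 := by linarith
  have hcne : ((c:ℝ) - 1) ≠ 0 := ne_of_gt hcpos
  -- obtain the colouring
  obtain ⟨f, hf⟩ : ∃ f : Fin n → Fin c, IsImproperColoring G d f := by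
    have hne : {N | ∃ f : Fin n → Fin N, IsImproperColoring G d f}.Nonempty := by
      refine ⟨n, id, fun v => ?_⟩
      have he : ({w | G.Adj v w ∧ id w = id v} : Set (Fin n)) = ∅ := by
        ext w
        simp only [Set.mem_setOf_eq, Set.mem_empty_iff_false, iff_false, not_and, id]
        intro hadj he
        exact G.loopless.irrefl v (he ▸ hadj)
      rw [he]
      simp
    have := Nat.sInf_mem hne
    rw [show sInf {N | ∃ f : Fin n → Fin N, IsImproperColoring G d f} = c from hc] at this
    exact this
  obtain ⟨hal_anti, σ1, hal_eq⟩ := hal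
  obtain ⟨hbe_anti, σ2, hbe_eq⟩ := hbe
  obtain ⟨w, hw1, hw2, hwmv, hwM⟩ := eigen_decomp h1 σ1
  obtain ⟨y, hy1, hy2, hymv, hyM⟩ := eigen_decomp h2 σ2
  have hwM' : ∀ u v, (X - G.adjMatrix ℝ) u v = ∑ j, al j * w j u * w j v := by
    intro u v
    rw [hwM u v]
    exact Finset.sum_congr rfl fun j _ => by rw [hal_eq]; rfl
  set F : Finset (Fin n) := Finset.univ.filter (fun i : Fin n => (i : ℕ) < m) with hF
  have hFcard : F.card = m := card_filter_lt_fin hmn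
  -- D matrix
  set D : Matrix (Fin n) (Fin n) ℝ :=
    Matrix.of (fun u v => if G.Adj u v ∧ f u = f v then (1:ℝ) else 0) with hD
  set quadD : Fin n → ℝ := fun i => ∑ u, ∑ v, y i u * D u v * y i v with hquadD
  -- z vectors
  set z : ℕ → Fin n → Fin n → ℂ :=
    fun k i v => (starRingEnd ℂ) ((omC c) ^ (k * (f v : ℕ))) * (y i v : ℂ) with hz
  -- key1 : quadratic form of M₂ at y i is be i
  have key1 : ∀ i : Fin n,
      ∑ u, ∑ v, y i u * (X + ((c : ℝ) - 1)⁻¹ • G.adjMatrix ℝ) u v * y i v = be i := by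
    intro i
    have hmv := hymv i
    have step : ∀ u, ∑ v, y i u * (X + ((c : ℝ) - 1)⁻¹ • G.adjMatrix ℝ) u v * y i v
        = y i u * (be i * y i u) := by
      intro u
      have : ((X + ((c : ℝ) - 1)⁻¹ • G.adjMatrix ℝ) *ᵥ y i) u = be i * y i u := by
        rw [hmv]
        simp only [Pi.smul_apply, smul_eq_mul]
        rw [hbe_eq]; rfl
      rw [← this]
      simp only [Matrix.mulVec, dotProduct]
      rw [Finset.mul_sum]
      exact Finset.sum_congr rfl fun v _ => by ring
    rw [Finset.sum_congr rfl fun u (_ : u ∈ Finset.univ) => step u]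
    have : ∑ u, y i u * (be i * y i u) = be i * ∑ u, y i u * y i u := by
      rw [Finset.mul_sum]
      exact Finset.sum_congr rfl fun u _ => by ring
    rw [this, hy1 i i, if_pos rfl, mul_one]
  -- orthonormality of z k over all i
  have honz : ∀ k : ℕ, ∀ i ∈ F, ∀ i' ∈ F,
      ∑ v, (starRingEnd ℂ) (z k i v) * z k i' v = if i = i' then (1:ℂ) else 0 := by
    intro k i _ i' _
    have hterm : ∀ v, (starRingEnd ℂ) (z k i v) * z k i' v = ((y i v * y i' v : ℝ) : ℂ) := by
      intro v
      simp only [hz, _root_.map_mul, Complex.conj_conj, Complex.conj_ofReal]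
      have := omC_normSq hc0 (k * (f v : ℕ))
      push_cast
      calc (omC c) ^ (k * (f v : ℕ)) * (y i v : ℂ)
            * ((starRingEnd ℂ) ((omC c) ^ (k * (f v : ℕ))) * (y i' v : ℂ))
          = ((omC c) ^ (k * (f v : ℕ)) * (starRingEnd ℂ) ((omC c) ^ (k * (f v : ℕ))))
            * ((y i v : ℂ) * (y i' v : ℂ)) := by ring
        _ = (y i v : ℂ) * (y i' v : ℂ) := by rw [this, one_mul]
    rw [Finset.sum_congr rfl fun v (_ : v ∈ Finset.univ) => hterm v]
    rw [← Complex.ofReal_sum, hy1 i i']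
    split_ifs <;> norm_num
  -- scalar identity
  have scalar_id : ∀ u v : Fin n,
      ((if f u = f v then (c:ℝ) else 0) - 1) * (X - G.adjMatrix ℝ) u v
        = ((c:ℝ) - 1) * (X + ((c : ℝ) - 1)⁻¹ • G.adjMatrix ℝ) u v - (c:ℝ) * D u v := by
    intro u v
    simp only [Matrix.sub_apply, Matrix.add_apply, Matrix.smul_apply, smul_eq_mul,
      SimpleGraph.adjMatrix_apply, hD, Matrix.of_apply]
    by_cases huv : u = v
    · subst huv
      simp only [G.irrefl, if_neg, if_pos rfl, and_false, false_and]
      norm_num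
    · rw [hX huv]
      by_cases hadj : G.Adj u v
      · by_cases hfe : f u = f v
        · simp only [hadj, hfe, and_self, if_pos, if_true]
          field_simp
          ring
        · simp only [hadj, hfe, and_false, if_true, if_false]
          field_simp
          ring
      · simp only [hadj, false_and, if_false]
        norm_num
  -- key3 : averaging identity
  have key3 : ∀ i : Fin n,
      ∑ k ∈ Finset.Ico 1 c, ∑ u, ∑ v,
          (starRingEnd ℂ) (z k i u) * ((X - G.adjMatrix ℝ) u v : ℂ) * z k i v
        = ((((c:ℝ) - 1) * be i - (c:ℝ) * quadD i : ℝ) : ℂ) := by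
    intro i
    have per_uv : ∀ u v : Fin n,
        ∑ k ∈ Finset.Ico 1 c,
            (starRingEnd ℂ) (z k i u) * ((X - G.adjMatrix ℝ) u v : ℂ) * z k i v
          = ((((c:ℝ) - 1) * (X + ((c : ℝ) - 1)⁻¹ • G.adjMatrix ℝ) u v
              - (c:ℝ) * D u v) * (y i u * y i v) : ℝ) := by
      intro u v
      have hterm : ∀ k, (starRingEnd ℂ) (z k i u) * ((X - G.adjMatrix ℝ) u v : ℂ) * z k i v
          = (((omC c) ^ ((f u : ℕ))) ^ k * ((starRingEnd ℂ) ((omC c) ^ ((f v : ℕ)))) ^ k)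
            * (((X - G.adjMatrix ℝ) u v : ℂ) * ((y i u : ℂ) * (y i v : ℂ))) := by
        intro k
        simp only [hz, _root_.map_mul, Complex.conj_conj, Complex.conj_ofReal]
        rw [mul_comm k (f u : ℕ), pow_mul, mul_comm k (f v : ℕ), pow_mul, map_pow]
        ring
      rw [Finset.sum_congr rfl fun k _ => hterm k, ← Finset.sum_mul]
      have hcs : (∑ k ∈ Finset.Ico 1 c,
          ((omC c) ^ ((f u : ℕ))) ^ k * ((starRingEnd ℂ) ((omC c) ^ ((f v : ℕ)))) ^ k)
          = (if f u = f v then (c:ℂ) else 0) - 1 := by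
        have := char_sum hc2 (f u) (f v)
        simpa [mul_pow] using this
      rw [hcs]
      have hsc := scalar_id u v
      by_cases hfe : f u = f v
      · rw [if_pos hfe]
        rw [if_pos hfe] at hsc
        have hcast := congrArg (fun r : ℝ => (r : ℂ) * ((y i u : ℂ) * (y i v : ℂ))) hsc
        push_cast at hcast ⊢
        linear_combination hcast
      · rw [if_neg hfe]
        rw [if_neg hfe] at hsc
        have hcast := congrArg (fun r : ℝ => (r : ℂ) * ((y i u : ℂ) * (y i v : ℂ))) hsc
        push_cast at hcast ⊢
        linear_combination hcast
    calc ∑ k ∈ Finset.Ico 1 c, ∑ u, ∑ v,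
            (starRingEnd ℂ) (z k i u) * ((X - G.adjMatrix ℝ) u v : ℂ) * z k i v
        = ∑ u, ∑ k ∈ Finset.Ico 1 c, ∑ v,
            (starRingEnd ℂ) (z k i u) * ((X - G.adjMatrix ℝ) u v : ℂ) * z k i v :=
          Finset.sum_comm
      _ = ∑ u, ∑ v, ∑ k ∈ Finset.Ico 1 c,
            (starRingEnd ℂ) (z k i u) * ((X - G.adjMatrix ℝ) u v : ℂ) * z k i v :=
          Finset.sum_congr rfl fun u _ => Finset.sum_comm
      _ = ((∑ u, ∑ v, (((c:ℝ) - 1) * (X + ((c : ℝ) - 1)⁻¹ • G.adjMatrix ℝ) u v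
              - (c:ℝ) * D u v) * (y i u * y i v) : ℝ) : ℂ) := by
          rw [Complex.ofReal_sum]
          refine Finset.sum_congr rfl fun u _ => ?_
          rw [Complex.ofReal_sum]
          exact Finset.sum_congr rfl fun v _ => per_uv u v
      _ = ((((c:ℝ) - 1) * be i - (c:ℝ) * quadD i : ℝ) : ℂ) := by
          congr 1
          rw [← key1 i]
          rw [hquadD]
          simp only
          rw [Finset.mul_sum, Finset.mul_sum, ← Finset.sum_sub_distrib]
          refine Finset.sum_congr rfl fun u _ => ?_
          rw [Finset.mul_sum, Finset.mul_sum, ← Finset.sum_sub_distrib]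
          refine Finset.sum_congr rfl fun v _ => ?_
          ring
  -- key4 : quadD bound
  have hDsym : ∀ u v, D u v = D v u := by
    intro u v
    have hiff : (G.Adj u v ∧ f u = f v) ↔ (G.Adj v u ∧ f v = f u) := by
      constructor <;> rintro ⟨a, b⟩ <;> exact ⟨a.symm, b.symm⟩
    simp only [hD, Matrix.of_apply, hiff]
  have hrow : ∀ u, ∑ v, D u v ≤ (d:ℝ) := by
    intro u
    have hcard : ∑ v, D u v
        = ((Finset.univ.filter (fun v => G.Adj u v ∧ f u = f v)).card : ℝ) := by
      simp only [hD, Matrix.of_apply]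
      rw [Finset.sum_boole]
    rw [hcard]
    have hset : ({w | G.Adj u w ∧ f w = f u} : Set (Fin n)).ncard
        = (Finset.univ.filter (fun v => G.Adj u v ∧ f u = f v)).card := by
      rw [Set.ncard_eq_toFinset_card']
      congr 1
      ext v
      simp only [Set.mem_toFinset, Set.mem_setOf_eq, Finset.mem_filter, Finset.mem_univ,
        true_and]
      exact and_congr_right fun _ => eq_comm
    have := hf u
    rw [hset] at this
    exact_mod_cast this
  have hDnn : ∀ u v, 0 ≤ D u v := by
    intro u v
    simp only [hD, Matrix.of_apply]
    split_ifs <;> norm_num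
  have key4 : ∀ i : Fin n, quadD i ≤ (d:ℝ) := by
    intro i
    have h11 : ∑ u, y i u * y i u = 1 := by rw [hy1 i i, if_pos rfl]
    have e : quadD i ≤ ∑ u, ∑ v, (D u v * (y i u * y i u) / 2 + D u v * (y i v * y i v) / 2) := by
      rw [hquadD]
      simp only
      refine Finset.sum_le_sum fun u _ => Finset.sum_le_sum fun v _ => ?_
      nlinarith [mul_nonneg (hDnn u v) (sq_nonneg (y i u - y i v))]
    have e2 : ∑ u, ∑ v, (D u v * (y i u * y i u) / 2 + D u v * (y i v * y i v) / 2)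
        = (∑ u, ∑ v, D u v * (y i u * y i u) / 2)
          + ∑ u, ∑ v, D u v * (y i v * y i v) / 2 := by
      rw [← Finset.sum_add_distrib]
      exact Finset.sum_congr rfl fun u _ => by rw [← Finset.sum_add_distrib]
    have e3 : ∑ u, ∑ v, D u v * (y i u * y i u) / 2 ≤ ∑ u, (d:ℝ) * (y i u * y i u) / 2 := by
      refine Finset.sum_le_sum fun u _ => ?_
      have eq1 : ∑ v, D u v * (y i u * y i u) / 2 = (∑ v, D u v) * (y i u * y i u) / 2 := by
        rw [← Finset.sum_div, ← Finset.sum_mul]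
      rw [eq1]
      gcongr
      · exact mul_self_nonneg _
      · exact hrow u
    have e4 : ∑ u, ∑ v, D u v * (y i v * y i v) / 2 ≤ ∑ v, (d:ℝ) * (y i v * y i v) / 2 := by
      rw [Finset.sum_comm]
      refine Finset.sum_le_sum fun v _ => ?_
      have eq1 : ∑ u, D u v * (y i v * y i v) / 2 = (∑ u, D u v) * (y i v * y i v) / 2 := by
        rw [← Finset.sum_div, ← Finset.sum_mul]
      rw [eq1]
      have hcol : ∑ u, D u v ≤ (d:ℝ) := by
        rw [Finset.sum_congr rfl fun u (_ : u ∈ Finset.univ) => hDsym u v]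
        exact hrow v
      gcongr
      · exact mul_self_nonneg _
    have e5 : ∑ u, (d:ℝ) * (y i u * y i u) / 2 = (d:ℝ) / 2 := by
      rw [← Finset.sum_div, ← Finset.mul_sum, h11, mul_one]
    rw [e2] at e
    rw [e5] at e3 e4
    linarith
  -- apply quad_bound for each k
  have main_k : ∀ k ∈ Finset.Ico 1 c,
      (∑ i ∈ F, ∑ u, ∑ v,
        (starRingEnd ℂ) (z k i u) * ((X - G.adjMatrix ℝ) u v : ℂ) * z k i v).re
        ≤ ∑ j ∈ F, al j := by
    intro k _
    exact quad_bound hn hmn al hal_anti w hw1 hw2 hwM' F hFcard (z k) (honz k)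
  have sum_k : ∑ k ∈ Finset.Ico 1 c, (∑ i ∈ F, ∑ u, ∑ v,
        (starRingEnd ℂ) (z k i u) * ((X - G.adjMatrix ℝ) u v : ℂ) * z k i v).re
      ≤ ((c:ℝ) - 1) * ∑ j ∈ F, al j := by
    calc ∑ k ∈ Finset.Ico 1 c, (∑ i ∈ F, ∑ u, ∑ v,
          (starRingEnd ℂ) (z k i u) * ((X - G.adjMatrix ℝ) u v : ℂ) * z k i v).re
        ≤ ∑ _k ∈ Finset.Ico 1 c, ∑ j ∈ F, al j := Finset.sum_le_sum main_k
      _ = ((c - 1 : ℕ) : ℝ) * ∑ j ∈ F, al j := by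
          rw [Finset.sum_const, Nat.card_Ico, nsmul_eq_mul]
      _ = ((c:ℝ) - 1) * ∑ j ∈ F, al j := by
          congr 1
          rw [Nat.cast_sub (by omega : 1 ≤ c)]
          norm_num
  have lhs_eval : ∑ k ∈ Finset.Ico 1 c, (∑ i ∈ F, ∑ u, ∑ v,
        (starRingEnd ℂ) (z k i u) * ((X - G.adjMatrix ℝ) u v : ℂ) * z k i v).re
      = ((c:ℝ) - 1) * (∑ i ∈ F, be i) - (c:ℝ) * ∑ i ∈ F, quadD i := by
    calc ∑ k ∈ Finset.Ico 1 c, (∑ i ∈ F, ∑ u, ∑ v,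
          (starRingEnd ℂ) (z k i u) * ((X - G.adjMatrix ℝ) u v : ℂ) * z k i v).re
        = ∑ k ∈ Finset.Ico 1 c, ∑ i ∈ F, (∑ u, ∑ v,
            (starRingEnd ℂ) (z k i u) * ((X - G.adjMatrix ℝ) u v : ℂ) * z k i v).re :=
          Finset.sum_congr rfl fun k _ => Complex.re_sum _ _
      _ = ∑ i ∈ F, ∑ k ∈ Finset.Ico 1 c, (∑ u, ∑ v,
            (starRingEnd ℂ) (z k i u) * ((X - G.adjMatrix ℝ) u v : ℂ) * z k i v).re :=
          Finset.sum_comm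
      _ = ∑ i ∈ F, (∑ k ∈ Finset.Ico 1 c, ∑ u, ∑ v,
            (starRingEnd ℂ) (z k i u) * ((X - G.adjMatrix ℝ) u v : ℂ) * z k i v).re :=
          Finset.sum_congr rfl fun i _ => (Complex.re_sum _ _).symm
      _ = ∑ i ∈ F, (((c:ℝ) - 1) * be i - (c:ℝ) * quadD i) :=
          Finset.sum_congr rfl fun i _ => by rw [key3 i, Complex.ofReal_re]
      _ = ((c:ℝ) - 1) * (∑ i ∈ F, be i) - (c:ℝ) * ∑ i ∈ F, quadD i := by
          rw [Finset.sum_sub_distrib, ← Finset.mul_sum, ← Finset.mul_sum]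
  have hquadsum : ∑ i ∈ F, quadD i ≤ (d:ℝ) * m := by
    calc ∑ i ∈ F, quadD i ≤ ∑ _i ∈ F, (d:ℝ) := Finset.sum_le_sum fun i _ => key4 i
      _ = (d:ℝ) * m := by rw [Finset.sum_const, hFcard, nsmul_eq_mul, mul_comm]
  have hcomb : ((c:ℝ) - 1) * (∑ i ∈ F, be i) - (c:ℝ) * ((d:ℝ) * m)
      ≤ ((c:ℝ) - 1) * ∑ j ∈ F, al j := by
    have h' := sum_k
    rw [lhs_eval] at h'
    have h2' : (c:ℝ) * ∑ i ∈ F, quadD i ≤ (c:ℝ) * ((d:ℝ) * m) :=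
      mul_le_mul_of_nonneg_left hquadsum (by positivity)
    linarith
  have hfin : (∑ i ∈ F, be i) - ∑ i ∈ F, al i ≤ (c:ℝ) * d * m / ((c:ℝ) - 1) := by
    rw [le_div_iff₀ hcpos]
    nlinarith [hcomb]
  linarith [hfin]
end

section
/- For every finite simple graph G with chromatic number χ(G) ≤ 4 and every integer d ≥ 0, the d-improper chromatic number of the strong product of G with K_{d+1} equals the chromatic number of G: χ^d(G ⊠ K_{d+1}) = χ(G). -/
open SimpleGraph Finset Matrix

set_option linter.unusedSectionVars false

namespace ImproperAux
open Finset

section Core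

variable {V : Type*} [Fintype V] [DecidableEq V] (G : SimpleGraph V) [DecidableRel G.Adj]
  (ord : V → ℕ) (s : ℕ) (a : V → Fin 3 → ℕ)

open Classical in
/-- Phase-1 local colouring rule. -/
noncomputable def col0 (v : V) : Fin 3 :=
  if hM : ∃ x, s < 2 * a v x then hM.choose
  else if ht : ∃ z, a v z = 0 then
    (if hp : ∃ u, G.Adj v u ∧ ¬ (∃ x, s < 2 * a u x) ∧ a u ht.choose = 0 then
      (if ord v < ord hp.choose then ht.choose + 1 else ht.choose + 2)
    else ht.choose + 1)
  else 0

variable {G ord s a}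

lemma fin3cases (x : Fin 3) : x = 0 ∨ x = 1 ∨ x = 2 := by fin_cases x <;> decide

section Facts

variable (hs : 0 < s) (hsum : ∀ v, a v 0 + a v 1 + a v 2 = s)
  (hstar : ∀ v x, 0 < a v x → a v x + ∑ u ∈ G.neighborFinset v, a u x ≤ s)

include hstar in
lemma pair_ineq {v u : V} {x : Fin 3} (hadj : G.Adj v u) (hpos : 0 < a v x) :
    a v x + a u x ≤ s := by
  have h := hstar v x hpos
  have hmem : u ∈ G.neighborFinset v := (SimpleGraph.mem_neighborFinset G v u).2 hadj
  have h3 : a u x ≤ ∑ t ∈ G.neighborFinset v, a t x :=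
    Finset.single_le_sum (f := fun t => a t x) (fun i _ => Nat.zero_le _) hmem
  omega

include hstar in
lemma triple_ineq {v u w : V} {x : Fin 3} (hadj1 : G.Adj v u) (hadj2 : G.Adj v w)
    (hne : u ≠ w) (hpos : 0 < a v x) : a v x + a u x + a w x ≤ s := by
  have h := hstar v x hpos
  have hsub : ({u, w} : Finset V) ⊆ G.neighborFinset v := by
    intro t ht
    simp only [Finset.mem_insert, Finset.mem_singleton] at ht
    rcases ht with rfl | rfl <;>
      exact (SimpleGraph.mem_neighborFinset G v t).2 (by assumption)
  have h2 : ∑ t ∈ ({u, w} : Finset V), a t x ≤ ∑ t ∈ G.neighborFinset v, a t x :=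
    Finset.sum_le_sum_of_subset hsub
  rw [Finset.sum_pair hne] at h2
  omega

include hsum in
lemma tie_half {v : V} {z x : Fin 3} (hM : ¬ ∃ y, s < 2 * a v y) (hz : a v z = 0)
    (hxz : x ≠ z) : 2 * a v x = s := by
  push_neg at hM
  have h0 := hM 0
  have h1 := hM 1
  have h2 := hM 2
  have hsv := hsum v
  rcases fin3cases z with rfl | rfl | rfl <;> rcases fin3cases x with rfl | rfl | rfl <;>
    first
      | exact absurd rfl hxz
      | omega

include hs hsum in
lemma tie_zero_unique {v : V} {z z' : Fin 3} (hM : ¬ ∃ y, s < 2 * a v y) (hz : a v z = 0)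
    (hz' : a v z' = 0) : z = z' := by
  by_contra hne
  have := tie_half hsum hM hz' (Ne.symm (Ne.symm hne))
  omega

include hstar in
lemma big_deg {v : V} (hvpos : ∀ x, 0 < a v x) (hsum : ∀ v, a v 0 + a v 1 + a v 2 = s)
    (hs : 0 < s) : (G.neighborFinset v).card ≤ 2 := by
  have h0 := hstar v 0 (hvpos 0)
  have h1 := hstar v 1 (hvpos 1)
  have h2 := hstar v 2 (hvpos 2)
  have e : (∑ u ∈ G.neighborFinset v, a u 0) + (∑ u ∈ G.neighborFinset v, a u 1)
      + (∑ u ∈ G.neighborFinset v, a u 2) = (G.neighborFinset v).card * s := by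
    rw [← Finset.sum_add_distrib, ← Finset.sum_add_distrib]
    rw [Finset.sum_congr rfl (fun u _ => hsum u), Finset.sum_const, smul_eq_mul]
  have hsv := hsum v
  have hcard : (G.neighborFinset v).card * s ≤ 2 * s := by omega
  exact Nat.le_of_mul_le_mul_right (by omega) hs

include hs hsum hstar in
lemma partner_unique {v u w : V} {z : Fin 3} (hMv : ¬ ∃ y, s < 2 * a v y) (hzv : a v z = 0)
    (hadj1 : G.Adj v u) (hadj2 : G.Adj v w)
    (hMu : ¬ ∃ y, s < 2 * a u y) (hzu : a u z = 0)
    (hMw : ¬ ∃ y, s < 2 * a w y) (hzw : a w z = 0) : u = w := by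
  by_contra hne
  have hz1 : z + 1 ≠ z := by
    have : ∀ t : Fin 3, t + 1 ≠ t := by decide
    exact this z
  have hv := tie_half hsum hMv hzv hz1
  have hu := tie_half hsum hMu hzu hz1
  have hw := tie_half hsum hMw hzw hz1
  have := triple_ineq hstar hadj1 hadj2 hne (x := z + 1) (by omega)
  omega

include hs hsum hstar in
lemma maj_nbr_of_tie {v u : V} {z x : Fin 3} (hMv : ¬ ∃ y, s < 2 * a v y) (hzv : a v z = 0)
    (hadj : G.Adj v u) (hx : s < 2 * a u x) : x = z := by
  by_contra hne
  have hv := tie_half hsum hMv hzv hne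
  have := pair_ineq hstar hadj (x := x) (by omega)
  omega

include hs hsum hstar in
lemma no_partner_of_diff {v u w : V} {zv zu : Fin 3}
    (hMv : ¬ ∃ y, s < 2 * a v y) (hzv : a v zv = 0)
    (hMu : ¬ ∃ y, s < 2 * a u y) (hzu : a u zu = 0)
    (hzne : zv ≠ zu) (hadj : G.Adj v u)
    (hadjw : G.Adj v w) (hMw : ¬ ∃ y, s < 2 * a w y) (hzw : a w zv = 0) : False := by
  have huw : u ≠ w := by
    rintro rfl
    have := tie_half hsum hMu hzu hzne
    omega
  obtain ⟨x, hx1, hx2⟩ : ∃ x : Fin 3, x ≠ zv ∧ x ≠ zu := by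
    have : ∀ z1 z2 : Fin 3, z1 ≠ z2 → ∃ x : Fin 3, x ≠ z1 ∧ x ≠ z2 := by decide
    exact this zv zu hzne
  have hv := tie_half hsum hMv hzv hx1
  have hu := tie_half hsum hMu hzu hx2
  have hw := tie_half hsum hMw hzw hx1
  have := triple_ineq hstar hadjw hadj huw.symm (x := x) (by omega)
  omega

end Facts

end Core


section Core2

variable {V : Type*} [Fintype V] [DecidableEq V] {G : SimpleGraph V} [DecidableRel G.Adj]
  {ord : V → ℕ} {s : ℕ} {a : V → Fin 3 → ℕ}

lemma col0_M {v : V} (hM : ∃ x, s < 2 * a v x) : col0 G ord s a v = hM.choose := by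
  rw [col0, dif_pos hM]

lemma col0_tie_p {v : V} (hM : ¬ ∃ x, s < 2 * a v x) (ht : ∃ z, a v z = 0)
    (hp : ∃ u, G.Adj v u ∧ ¬ (∃ x, s < 2 * a u x) ∧ a u ht.choose = 0) :
    col0 G ord s a v =
      (if ord v < ord hp.choose then ht.choose + 1 else ht.choose + 2) := by
  rw [col0, dif_neg hM, dif_pos ht, dif_pos hp]

lemma col0_tie_nop {v : V} (hM : ¬ ∃ x, s < 2 * a v x) (ht : ∃ z, a v z = 0)
    (hp : ¬ ∃ u, G.Adj v u ∧ ¬ (∃ x, s < 2 * a u x) ∧ a u ht.choose = 0) :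
    col0 G ord s a v = ht.choose + 1 := by
  rw [col0, dif_neg hM, dif_pos ht, dif_neg hp]

lemma col0_big {v : V} (hM : ¬ ∃ x, s < 2 * a v x) (ht : ¬ ∃ z, a v z = 0) :
    col0 G ord s a v = 0 := by
  rw [col0, dif_neg hM, dif_neg ht]

variable (hs : 0 < s) (hsum : ∀ v, a v 0 + a v 1 + a v 2 = s)
  (hstar : ∀ v x, 0 < a v x → a v x + ∑ u ∈ G.neighborFinset v, a u x ≤ s)

include hs hsum in
lemma col0_pos (v : V) : 0 < a v (col0 G ord s a v) := by
  by_cases hM : ∃ x, s < 2 * a v x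
  · rw [col0_M hM]
    have := hM.choose_spec
    omega
  · by_cases ht : ∃ z, a v z = 0
    · have h1 : ∀ t : Fin 3, t + 1 ≠ t := by decide
      have h2 : ∀ t : Fin 3, t + 2 ≠ t := by decide
      have hz := ht.choose_spec
      have ha1 : 2 * a v (ht.choose + 1) = s := tie_half hsum hM hz (h1 _)
      have ha2 : 2 * a v (ht.choose + 2) = s := tie_half hsum hM hz (h2 _)
      by_cases hp : ∃ u, G.Adj v u ∧ ¬ (∃ x, s < 2 * a u x) ∧ a u ht.choose = 0
      · rw [col0_tie_p hM ht hp]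
        by_cases ho : ord v < ord hp.choose
        · rw [if_pos ho]; omega
        · rw [if_neg ho]; omega
      · rw [col0_tie_nop hM ht hp]; omega
    · rw [col0_big hM ht]
      push_neg at ht
      exact Nat.pos_of_ne_zero (ht 0)

include hs hsum hstar in
lemma prop_MM {u v : V} (hadj : G.Adj u v) (hMu : ∃ x, s < 2 * a u x)
    (hMv : ∃ x, s < 2 * a v x) : col0 G ord s a u ≠ col0 G ord s a v := by
  rw [col0_M hMu, col0_M hMv]
  intro heq
  have h1 := hMu.choose_spec
  have h2 := hMv.choose_spec
  rw [heq] at h1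
  have := pair_ineq hstar hadj.symm (x := hMv.choose) (by omega)
  omega

include hs hsum hstar in
lemma prop_MT {u v : V} (hadj : G.Adj u v) (hMu : ∃ x, s < 2 * a u x)
    (hMv : ¬ ∃ x, s < 2 * a v x) (htv : ∃ z, a v z = 0) :
    col0 G ord s a u ≠ col0 G ord s a v := by
  have h1 : ∀ t : Fin 3, t ≠ t + 1 := by decide
  have h2 : ∀ t : Fin 3, t ≠ t + 2 := by decide
  have hx : hMu.choose = htv.choose :=
    maj_nbr_of_tie hs hsum hstar hMv htv.choose_spec hadj.symm hMu.choose_spec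
  rw [col0_M hMu, hx]
  by_cases hp : ∃ w, G.Adj v w ∧ ¬ (∃ x, s < 2 * a w x) ∧ a w htv.choose = 0
  · rw [col0_tie_p hMv htv hp]
    by_cases ho : ord v < ord hp.choose
    · rw [if_pos ho]; exact h1 _
    · rw [if_neg ho]; exact h2 _
  · rw [col0_tie_nop hMv htv hp]; exact h1 _

include hs hsum hstar in
lemma prop_TT (hord : Function.Injective ord) {u v : V} (hadj : G.Adj u v)
    (hMu : ¬ ∃ x, s < 2 * a u x) (htu : ∃ z, a u z = 0)
    (hMv : ¬ ∃ x, s < 2 * a v x) (htv : ∃ z, a v z = 0) :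
    col0 G ord s a u ≠ col0 G ord s a v := by
  have hzu := htu.choose_spec
  have hzv := htv.choose_spec
  by_cases hzz : htu.choose = htv.choose
  · -- same zero colour: mutual partners
    have hpu : ∃ w, G.Adj u w ∧ ¬ (∃ x, s < 2 * a w x) ∧ a w htu.choose = 0 :=
      ⟨v, hadj, hMv, by rw [hzz]; exact hzv⟩
    have hpv : ∃ w, G.Adj v w ∧ ¬ (∃ x, s < 2 * a w x) ∧ a w htv.choose = 0 :=
      ⟨u, hadj.symm, hMu, by rw [← hzz]; exact hzu⟩
    obtain ⟨hw1, hw2, hw3⟩ := hpu.choose_spec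
    obtain ⟨hw1', hw2', hw3'⟩ := hpv.choose_spec
    have hpc : hpu.choose = v :=
      partner_unique hs hsum hstar hMu hzu hw1 hadj hw2 hw3 hMv (by rw [hzz]; exact hzv)
    have hpc' : hpv.choose = u :=
      partner_unique hs hsum hstar hMv hzv hw1' hadj.symm hw2' hw3' hMu
        (by rw [← hzz]; exact hzu)
    rw [col0_tie_p hMu htu hpu, col0_tie_p hMv htv hpv, hpc, hpc', ← hzz]
    have hone : ord u ≠ ord v := fun h => G.ne_of_adj hadj (hord h)
    have hfact : ∀ t : Fin 3, t + 1 ≠ t + 2 := by decide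
    by_cases ho : ord u < ord v
    · rw [if_pos ho, if_neg (by omega)]; exact hfact _
    · rw [if_neg ho, if_pos (by omega)]; exact (hfact _).symm
  · -- different zero colours: no partners
    have hpu : ¬ ∃ w, G.Adj u w ∧ ¬ (∃ x, s < 2 * a w x) ∧ a w htu.choose = 0 := by
      rintro ⟨w, hw1, hw2, hw3⟩
      exact no_partner_of_diff hs hsum hstar hMu hzu hMv hzv hzz hadj hw1 hw2 hw3
    have hpv : ¬ ∃ w, G.Adj v w ∧ ¬ (∃ x, s < 2 * a w x) ∧ a w htv.choose = 0 := by
      rintro ⟨w, hw1, hw2, hw3⟩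
      exact no_partner_of_diff hs hsum hstar hMv hzv hMu hzu (Ne.symm hzz) hadj.symm hw1
        hw2 hw3
    rw [col0_tie_nop hMu htu hpu, col0_tie_nop hMv htv hpv]
    have hinj : ∀ t t' : Fin 3, t ≠ t' → t + 1 ≠ t' + 1 := by decide
    exact hinj _ _ hzz

include hs hsum hstar in
lemma col0_proper (hord : Function.Injective ord) {u v : V} (hadj : G.Adj u v)
    (hBu : (∃ x, s < 2 * a u x) ∨ (∃ z, a u z = 0))
    (hBv : (∃ x, s < 2 * a v x) ∨ (∃ z, a v z = 0)) :
    col0 G ord s a u ≠ col0 G ord s a v := by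
  by_cases hMu : ∃ x, s < 2 * a u x
  · by_cases hMv : ∃ x, s < 2 * a v x
    · exact prop_MM hs hsum hstar hadj hMu hMv
    · exact prop_MT hs hsum hstar hadj hMu hMv (hBv.resolve_left hMv)
  · by_cases hMv : ∃ x, s < 2 * a v x
    · exact (prop_MT hs hsum hstar hadj.symm hMv hMu (hBu.resolve_left hMu)).symm
    · exact prop_TT hs hsum hstar hord hadj hMu (hBu.resolve_left hMu) hMv
        (hBv.resolve_left hMv)

end Core2


section Core3

variable {V : Type*} [Fintype V] [DecidableEq V] {G : SimpleGraph V} [DecidableRel G.Adj]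
  {ord : V → ℕ} {s : ℕ} {a : V → Fin 3 → ℕ}

lemma core_exists (hord : Function.Injective ord) (hs : 0 < s)
    (hsum : ∀ v, a v 0 + a v 1 + a v 2 = s)
    (hstar : ∀ v x, 0 < a v x → a v x + ∑ u ∈ G.neighborFinset v, a u x ≤ s) :
    ∃ c : V → Fin 3, (∀ v, 0 < a v (c v)) ∧ ∀ u v, G.Adj u v → c u ≠ c v := by
  classical
  set B : Finset V :=
    univ.filter (fun v => ¬ (∃ x, s < 2 * a v x) ∧ ∀ x, 0 < a v x) with hB
  have hBmem : ∀ v, v ∈ B ↔ (¬ (∃ x, s < 2 * a v x) ∧ ∀ x, 0 < a v x) := by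
    intro v; rw [hB, Finset.mem_filter]; simp
  have key : ∀ S : Finset V, S ⊆ B → ∃ c : V → Fin 3,
      (∀ v, v ∉ S → c v = col0 G ord s a v) ∧ (∀ v, 0 < a v (c v)) ∧
      (∀ v ∈ S, ∀ u, G.Adj v u → (u ∈ S ∨ u ∉ B) → c v ≠ c u) := by
    intro S
    induction S using Finset.induction_on with
    | empty =>
      intro _
      exact ⟨col0 G ord s a, fun v _ => rfl, col0_pos hs hsum, by simp⟩
    | @insert v S hvS ih =>
      intro hsub
      have hSsub : S ⊆ B := (Finset.subset_insert _ _).trans hsub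
      obtain ⟨c', h1, h2, h3⟩ := ih hSsub
      have hvB := (hBmem v).1 (hsub (Finset.mem_insert_self v S))
      obtain ⟨hvM, hvpos⟩ := hvB
      have hdeg : (G.neighborFinset v).card ≤ 2 := big_deg hstar hvpos hsum hs
      obtain ⟨x, hx⟩ : ∃ x : Fin 3, ∀ u ∈ G.neighborFinset v, c' u ≠ x := by
        have himg : ((G.neighborFinset v).image c').card ≤ 2 :=
          le_trans Finset.card_image_le hdeg
        have hcompl : (((G.neighborFinset v).image c')ᶜ : Finset (Fin 3)).Nonempty := by
          rw [← Finset.card_pos, Finset.card_compl]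
          have h3' : Fintype.card (Fin 3) = 3 := by simp
          omega
        obtain ⟨y, hy⟩ := hcompl
        exact ⟨y, fun u hu heq => (Finset.mem_compl.1 hy)
          (Finset.mem_image.2 ⟨u, hu, heq⟩)⟩
      refine ⟨Function.update c' v x, ?_, ?_, ?_⟩
      · intro w hw
        rw [Function.update_of_ne
          (fun h => hw (by rw [h]; exact Finset.mem_insert_self v S))]
        exact h1 w (fun hwS => hw (Finset.mem_insert_of_mem hwS))
      · intro w
        by_cases hwv : w = v
        · subst hwv; rw [Function.update_self]; exact hvpos x
        · rw [Function.update_of_ne hwv]; exact h2 w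
      · intro w hw u hadj hu
        by_cases hwv : w = v
        · subst hwv
          rw [Function.update_self]
          have huv : u ≠ w := fun h => G.loopless.irrefl w (h ▸ hadj)
          rw [Function.update_of_ne huv]
          exact fun heq =>
            hx u ((SimpleGraph.mem_neighborFinset G w u).2 hadj) heq.symm
        · have hwS : w ∈ S := (Finset.mem_insert.1 hw).resolve_left hwv
          rw [Function.update_of_ne hwv]
          by_cases huv : u = v
          · subst huv
            rw [Function.update_self]
            exact fun heq =>
              hx w ((SimpleGraph.mem_neighborFinset G u w).2 hadj.symm) heq
          · rw [Function.update_of_ne huv]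
            apply h3 w hwS u hadj
            rcases hu with hu | hu
            · exact Or.inl ((Finset.mem_insert.1 hu).resolve_left huv)
            · exact Or.inr hu
  obtain ⟨c, hc1, hc2, hc3⟩ := key B Finset.Subset.rfl
  refine ⟨c, hc2, ?_⟩
  intro u v hadj
  by_cases huB : u ∈ B
  · exact hc3 u huB v hadj (em' (v ∈ B)).symm
  · by_cases hvB : v ∈ B
    · exact (hc3 v hvB u hadj.symm (Or.inr huB)).symm
    · rw [hc1 u huB, hc1 v hvB]
      have hnotB : ∀ w, w ∉ B → (∃ x, s < 2 * a w x) ∨ (∃ z, a w z = 0) := by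
        intro w hw
        rw [hBmem] at hw
        by_cases hMw : ∃ x, s < 2 * a w x
        · exact Or.inl hMw
        · push_neg at hw hMw
          obtain ⟨z, hz⟩ := hw hMw
          exact Or.inr ⟨z, by omega⟩
      exact col0_proper hs hsum hstar hord hadj (hnotB u huB) (hnotB v hvB)

end Core3

end ImproperAux

open ImproperPaper in
theorem stmt_17 {V : Type*} [Fintype V] (G : SimpleGraph V) (d : ℕ)
    (hchi : chromNum G ≤ 4) :
    improperChromaticNumber (strongProd G (⊤ : SimpleGraph (Fin (d + 1)))) d =
      chromNum G := by
  classical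
  haveI hdec : DecidableRel G.Adj := fun a b => Classical.propDecidable _
  have hadj_iff : ∀ (p q : V × Fin (d + 1)),
      (strongProd G (⊤ : SimpleGraph (Fin (d + 1)))).Adj p q ↔
        ((p.1 = q.1 ∧ (⊤ : SimpleGraph (Fin (d + 1))).Adj p.2 q.2) ∨
          (G.Adj p.1 q.1 ∧ p.2 = q.2) ∨
          (G.Adj p.1 q.1 ∧ (⊤ : SimpleGraph (Fin (d + 1))).Adj p.2 q.2)) :=
    fun p q => Iff.rfl
  -- the improper colouring set is nonempty
  have himp_ne : {n | ∃ c : V × Fin (d + 1) → Fin n,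
      IsImproperColoring (strongProd G (⊤ : SimpleGraph (Fin (d + 1)))) d c}.Nonempty := by
    refine ⟨Fintype.card (V × Fin (d + 1)),
      fun p => Fintype.equivFin (V × Fin (d + 1)) p, fun p => ?_⟩
    have hempty : {w | (strongProd G (⊤ : SimpleGraph (Fin (d + 1)))).Adj p w ∧
        Fintype.equivFin (V × Fin (d + 1)) w = Fintype.equivFin (V × Fin (d + 1)) p}
        = (∅ : Set (V × Fin (d + 1))) := by
      ext w
      simp only [Set.mem_setOf_eq, Set.mem_empty_iff_false, iff_false, not_and]
      intro hadj heq
      have : w = p := (Fintype.equivFin (V × Fin (d + 1))).injective heq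
      subst this
      exact (strongProd G (⊤ : SimpleGraph (Fin (d + 1)))).loopless.irrefl w hadj
    rw [hempty]
    simp
  -- the proper colouring set is nonempty
  have hchrom_ne : {n | ∃ c : V → Fin n, ∀ u v, G.Adj u v → c u ≠ c v}.Nonempty :=
    ⟨Fintype.card V, fun v => Fintype.equivFin V v,
      fun u v h heq => G.ne_of_adj h ((Fintype.equivFin V).injective heq)⟩
  obtain ⟨cp, hcp⟩ : ∃ c : V → Fin (chromNum G), ∀ u v, G.Adj u v → c u ≠ c v :=
    Nat.sInf_mem hchrom_ne
  -- upper bound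
  have hup : improperChromaticNumber (strongProd G (⊤ : SimpleGraph (Fin (d + 1)))) d ≤
      chromNum G := by
    apply Nat.sInf_le
    refine ⟨fun p => cp p.1, ?_⟩
    rintro ⟨v, i⟩
    have hsub : {w | (strongProd G (⊤ : SimpleGraph (Fin (d + 1)))).Adj (v, i) w ∧
        (fun p : V × Fin (d + 1) => cp p.1) w = (fun p : V × Fin (d + 1) => cp p.1) (v, i)} ⊆
        (fun j => ((v : V), j)) '' {j | j ≠ i} := by
      rintro ⟨u, j⟩ ⟨hadj, heq⟩
      simp only at heq
      rcases (hadj_iff (v, i) (u, j)).1 hadj with ⟨h1, h2⟩ | ⟨h1, h2⟩ | ⟨h1, h2⟩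
      · refine ⟨j, ?_, ?_⟩
        · exact fun h => ((SimpleGraph.top_adj _ _).1 h2) h.symm
        · exact Prod.ext h1 rfl
      · exact absurd heq.symm (hcp v u h1)
      · exact absurd heq.symm (hcp v u h1)
    have h1 := Set.ncard_le_ncard hsub (Set.toFinite _)
    have h2 : ((fun j => ((v : V), j)) '' {j | j ≠ i}).ncard =
        ({j | j ≠ i} : Set (Fin (d + 1))).ncard :=
      Set.ncard_image_of_injective _ (fun j1 j2 h => by simpa using congrArg Prod.snd h)
    have h3 : ({j | j ≠ i} : Set (Fin (d + 1))).ncard = d := by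
      have he : ({j | j ≠ i} : Set (Fin (d + 1))) = ↑(Finset.univ.erase i) := by
        ext j; simp
      rw [he, Set.ncard_coe_finset, Finset.card_erase_of_mem (Finset.mem_univ i),
        Finset.card_univ, Fintype.card_fin]
      omega
    omega
  -- now suppose the two numbers differ
  by_contra hne'
  have hlt : improperChromaticNumber (strongProd G (⊤ : SimpleGraph (Fin (d + 1)))) d <
      chromNum G := lt_of_le_of_ne hup hne'
  set m := improperChromaticNumber (strongProd G (⊤ : SimpleGraph (Fin (d + 1)))) d with hm
  have hm3 : m ≤ 3 := by omega
  obtain ⟨ct, hct⟩ : ∃ c : V × Fin (d + 1) → Fin m,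
      IsImproperColoring (strongProd G (⊤ : SimpleGraph (Fin (d + 1)))) d c :=
    Nat.sInf_mem himp_ne
  set f : V × Fin (d + 1) → Fin 3 := fun p => Fin.castLE hm3 (ct p) with hf
  set a : V → Fin 3 → ℕ :=
    fun v x => (Finset.univ.filter (fun j : Fin (d + 1) => f (v, j) = x)).card with ha
  have hsum : ∀ v, a v 0 + a v 1 + a v 2 = d + 1 := by
    intro v
    have key : ∀ (g : Fin (d + 1) → Fin 3),
        (Finset.univ.filter (fun j => g j = 0)).card +
        (Finset.univ.filter (fun j => g j = 1)).card +
        (Finset.univ.filter (fun j => g j = 2)).card = d + 1 := by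
      intro g
      have := Finset.card_eq_sum_card_fiberwise
        (f := g) (s := Finset.univ) (t := Finset.univ)
        (fun j _ => Finset.mem_univ _)
      rw [Fin.sum_univ_three] at this
      simp only [Finset.card_univ, Fintype.card_fin] at this
      omega
    simp only [ha]
    exact key (fun j => f (v, j))
  have hstar : ∀ v x, 0 < a v x →
      a v x + ∑ u ∈ G.neighborFinset v, a u x ≤ d + 1 := by
    intro v x hpos
    simp only [ha] at hpos ⊢
    obtain ⟨j₀, hj₀mem⟩ := Finset.card_pos.1 hpos
    have hj₀ : f (v, j₀) = x := (Finset.mem_filter.1 hj₀mem).2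
    set T := (insert v (G.neighborFinset v)).biUnion
      (fun u => (Finset.univ.filter (fun j : Fin (d + 1) => f (u, j) = x)).image
        (fun j => ((u : V), j))) with hT
    have hdisj : ∀ u1 ∈ insert v (G.neighborFinset v), ∀ u2 ∈ insert v (G.neighborFinset v),
        u1 ≠ u2 → Disjoint
          ((Finset.univ.filter (fun j : Fin (d + 1) => f (u1, j) = x)).image
            (fun j => ((u1 : V), j)))
          ((Finset.univ.filter (fun j : Fin (d + 1) => f (u2, j) = x)).image
            (fun j => ((u2 : V), j))) := by
      intro u1 _ u2 _ hne12
      rw [Finset.disjoint_left]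
      intro p hp1 hp2
      obtain ⟨j1, _, he1⟩ := Finset.mem_image.1 hp1
      obtain ⟨j2, _, he2⟩ := Finset.mem_image.1 hp2
      exact hne12 (by rw [← he1] at he2; exact (congrArg Prod.fst he2).symm)
    have himgcard : ∀ u : V,
        ((Finset.univ.filter (fun j : Fin (d + 1) => f (u, j) = x)).image
          (fun j => ((u : V), j))).card =
          (Finset.univ.filter (fun j : Fin (d + 1) => f (u, j) = x)).card :=
      fun u => Finset.card_image_of_injective _
        (fun j1 j2 h => by simpa using congrArg Prod.snd h)
    have hvN : v ∉ G.neighborFinset v := by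
      simp [SimpleGraph.mem_neighborFinset]
    have hcardT : T.card =
        (Finset.univ.filter (fun j : Fin (d + 1) => f (v, j) = x)).card +
        ∑ u ∈ G.neighborFinset v,
          (Finset.univ.filter (fun j : Fin (d + 1) => f (u, j) = x)).card := by
      rw [hT, Finset.card_biUnion hdisj, Finset.sum_congr rfl (fun u _ => himgcard u),
        Finset.sum_insert hvN]
    have hp₀T : (v, j₀) ∈ T := by
      rw [hT]
      exact Finset.mem_biUnion.2 ⟨v, Finset.mem_insert_self _ _,
        Finset.mem_image.2 ⟨j₀, hj₀mem, rfl⟩⟩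
    have hsubS : ↑(T.erase (v, j₀)) ⊆
        {w | (strongProd G (⊤ : SimpleGraph (Fin (d + 1)))).Adj (v, j₀) w ∧
          ct w = ct (v, j₀)} := by
      rintro ⟨u, j⟩ hmem
      have hmem' := Finset.mem_coe.1 hmem
      rw [Finset.mem_erase] at hmem'
      obtain ⟨hnep, hmemT⟩ := hmem'
      rw [hT] at hmemT
      obtain ⟨u', hu', himg⟩ := Finset.mem_biUnion.1 hmemT
      obtain ⟨j', hj', heqp⟩ := Finset.mem_image.1 himg
      injection heqp with e1 e2
      subst e1; subst e2
      have hfuj : f (u', j') = x := (Finset.mem_filter.1 hj').2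
      constructor
      · rw [hadj_iff]
        rcases Finset.mem_insert.1 hu' with rfl | huN
        · left
          exact ⟨rfl, (SimpleGraph.top_adj _ _).2 (fun h => hnep (Prod.ext rfl h.symm))⟩
        · have hadj : G.Adj v u' := (SimpleGraph.mem_neighborFinset G v u').1 huN
          by_cases hj : j' = j₀
          · right; left; exact ⟨hadj, hj.symm⟩
          · right; right; exact ⟨hadj, (SimpleGraph.top_adj _ _).2 (fun h => hj h.symm)⟩
      · have hfeq : f (u', j') = f (v, j₀) := by rw [hfuj, hj₀]
        have hval := congrArg Fin.val hfeq
        simp only [hf, Fin.coe_castLE] at hval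
        exact Fin.ext hval
    have hccount : (T.erase (v, j₀)).card ≤ d := by
      have h1 : ((T.erase (v, j₀) : Finset (V × Fin (d + 1))) :
          Set (V × Fin (d + 1))).ncard = (T.erase (v, j₀)).card := Set.ncard_coe_finset _
      have h2 := Set.ncard_le_ncard hsubS (Set.toFinite _)
      have h3 := hct (v, j₀)
      omega
    have h4 := Finset.card_erase_add_one hp₀T
    omega
  obtain ⟨cc, hccpos, hccprop⟩ := ImproperAux.core_exists (G := G)
    (ord := fun v => (Fintype.equivFin V v : ℕ))
    (fun v w h => (Fintype.equivFin V).injective (Fin.val_injective h))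
    (Nat.succ_pos d) hsum hstar
  have hltm : ∀ v, (cc v : ℕ) < m := by
    intro v
    have hpos := hccpos v
    simp only [ha] at hpos
    obtain ⟨j, hj⟩ := Finset.card_pos.1 hpos
    have hfj : f (v, j) = cc v := (Finset.mem_filter.1 hj).2
    have hval := congrArg Fin.val hfj
    simp only [hf, Fin.coe_castLE] at hval
    rw [← hval]
    exact (ct (v, j)).isLt
  have hchromle : chromNum G ≤ m := by
    apply Nat.sInf_le
    refine ⟨fun v => ⟨(cc v : ℕ), hltm v⟩, ?_⟩
    intro u v hadj heq
    simp only [Fin.mk.injEq] at heq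
    exact hccprop u v hadj (Fin.ext heq)
  omega
end
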